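/- arXiv:1807.07721 — 11 statements merged into one kernel-verified Lean document; each statement's English description precedes it below -/
import Mathlib

section
/- For the winning streak Markov chain on {1,…,n}, the access time equals H(μ,ν) = max_{j ∈ {1,…,n}} ( E_{Z∼ν}[2^Z · 1_{Z ≤ j}] − E_{Z∼μ}[2^Z · 1_{Z ≤ j}] ). -/
open Finset

/-- For the winning streak Markov chain on `{1,…,n}` (state `k : Fin n`
represents the integer `k+1`), whose mean hitting times are `E_i[τ_j] = 2^j − 2^i`
for `i < j` and `E_i[τ_j] = 2^j` for `i > j`, the access time
`H(μ,ν) = max_j Σ_i (μ_i − ν_i) E_i[τ_j]` equals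
`max_j (E_ν[2^Z 1_{Z ≤ j}] − E_μ[2^Z 1_{Z ≤ j}])`. -/
theorem winning_streak_access_time_formula
    (n : ℕ) (hn : 0 < n)
    (ET : Fin n → Fin n → ℝ)
    (hET : ∀ i j : Fin n, ET i j =
      if (i : ℕ) < (j : ℕ) then 2 ^ ((j : ℕ) + 1) - 2 ^ ((i : ℕ) + 1)
      else if (j : ℕ) < (i : ℕ) then 2 ^ ((j : ℕ) + 1)
      else 0)
    (μ ν : Fin n → ℝ)
    (hμ0 : ∀ i, 0 ≤ μ i) (hμ1 : ∑ i, μ i = 1)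
    (hν0 : ∀ i, 0 ≤ ν i) (hν1 : ∑ i, ν i = 1) :
    univ.sup' ⟨⟨0, hn⟩, mem_univ _⟩ (fun j => ∑ i, (μ i - ν i) * ET i j)
      = univ.sup' ⟨⟨0, hn⟩, mem_univ _⟩ (fun j : Fin n =>
          (∑ i, ν i * (if (i : ℕ) ≤ (j : ℕ) then (2 : ℝ) ^ ((i : ℕ) + 1) else 0))
          - (∑ i, μ i * (if (i : ℕ) ≤ (j : ℕ) then (2 : ℝ) ^ ((i : ℕ) + 1) else 0))) := by
  refine sup'_congr _ rfl fun j _ => ?_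
  have key : ∀ i : Fin n, (μ i - ν i) * ET i j
      = (μ i - ν i) * (2:ℝ)^((j:ℕ)+1)
        + (ν i * (if (i:ℕ) ≤ (j:ℕ) then (2:ℝ)^((i:ℕ)+1) else 0)
          - μ i * (if (i:ℕ) ≤ (j:ℕ) then (2:ℝ)^((i:ℕ)+1) else 0)) := by
    intro i
    rw [hET]
    rcases lt_trichotomy (i:ℕ) (j:ℕ) with h|h|h
    · simp only [if_pos h, if_pos h.le]; ring
    · rw [if_neg (by omega), if_neg (by omega), if_pos (by omega), h]; ring
    · rw [if_neg (by omega), if_pos h, if_neg (by omega)]; ring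
  rw [Finset.sum_congr rfl (fun i _ => key i), Finset.sum_add_distrib, ← Finset.sum_mul,
    Finset.sum_sub_distrib, hμ1, hν1, Finset.sum_sub_distrib]
  ring
end

section
/- For the winning streak Markov chain on {1,…,n}, the access time satisfies max{ E_{Z∼ν}[2^Z] − E_{Z∼μ}[2^Z], 0 } ≤ H(μ,ν) ≤ 2^n. -/
open Finset

private lemma geom_tail_sum : ∀ d : ℕ, ∑ l ∈ Finset.range d, (2:ℝ) ^ (d - l) = 2 ^ (d+1) - 2 := by
  intro d
  induction d with
  | zero => simp
  | succ d ih =>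
    rw [Finset.sum_range_succ']
    have h1 : ∀ l ∈ Finset.range d, (2:ℝ) ^ (d + 1 - (l + 1)) = 2 ^ (d - l) := by
      intro l _; congr 1; omega
    rw [Finset.sum_congr rfl h1, ih]
    simp [pow_succ]
    ring

/-- For the winning streak Markov chain on `{1,…,n}` (state `k : Fin n`
represents the integer `k+1`), whose mean hitting times are `E_i[τ_j] = 2^j − 2^i`
for `i < j` and `E_i[τ_j] = 2^j` for `i > j`, the access time satisfies
`max{E_ν[2^Z] − E_μ[2^Z], 0} ≤ H(μ,ν) ≤ 2^n`. -/
theorem winning_streak_access_time_bounds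
    (n : ℕ) (hn : 0 < n)
    (ET : Fin n → Fin n → ℝ)
    (hET : ∀ i j : Fin n, ET i j =
      if (i : ℕ) < (j : ℕ) then 2 ^ ((j : ℕ) + 1) - 2 ^ ((i : ℕ) + 1)
      else if (j : ℕ) < (i : ℕ) then 2 ^ ((j : ℕ) + 1)
      else 0)
    (μ ν : Fin n → ℝ)
    (hμ0 : ∀ i, 0 ≤ μ i) (hμ1 : ∑ i, μ i = 1)
    (hν0 : ∀ i, 0 ≤ ν i) (hν1 : ∑ i, ν i = 1) :
    max ((∑ i, ν i * (2 : ℝ) ^ ((i : ℕ) + 1)) - ∑ i, μ i * (2 : ℝ) ^ ((i : ℕ) + 1)) 0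
      ≤ univ.sup' ⟨⟨0, hn⟩, mem_univ _⟩ (fun j => ∑ i, (μ i - ν i) * ET i j) ∧
    univ.sup' ⟨⟨0, hn⟩, mem_univ _⟩ (fun j => ∑ i, (μ i - ν i) * ET i j)
      ≤ 2 ^ n := by
  set g : Fin n → ℝ := fun i => (ν i - μ i) * 2 ^ ((i : ℕ) + 1) with hg
  have hsum0 : ∑ i, (μ i - ν i) = 0 := by
    rw [Finset.sum_sub_distrib, hμ1, hν1]; ring
  -- key identity: the access-time sum is a partial sum of g
  have key : ∀ j : Fin n, (∑ i, (μ i - ν i) * ET i j)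
      = ∑ i : Fin n, (if (i : ℕ) ≤ (j : ℕ) then g i else 0) := by
    intro j
    have h1 : ∀ i : Fin n, (μ i - ν i) * ET i j
        = (μ i - ν i) * 2 ^ ((j:ℕ)+1)
          - (if (i : ℕ) ≤ (j : ℕ) then (μ i - ν i) * 2 ^ ((i:ℕ)+1) else 0) := by
      intro i
      rw [hET]
      rcases lt_trichotomy ((i:ℕ)) ((j:ℕ)) with h | h | h
      · simp only [h, if_pos, h.le, if_true]
        ring
      · simp only [h, lt_irrefl, if_false, le_refl, if_true]
        ring
      · simp only [not_lt.mpr h.le, if_false, h, if_true, not_le.mpr h]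
        ring
    calc ∑ i, (μ i - ν i) * ET i j
        = ∑ i : Fin n, ((μ i - ν i) * 2 ^ ((j:ℕ)+1)
            - (if (i:ℕ) ≤ (j:ℕ) then (μ i - ν i) * 2 ^ ((i:ℕ)+1) else 0)) :=
          Finset.sum_congr rfl fun i _ => h1 i
      _ = (∑ i, (μ i - ν i)) * 2 ^ ((j:ℕ)+1)
            - ∑ i : Fin n, (if (i:ℕ) ≤ (j:ℕ) then (μ i - ν i) * 2 ^ ((i:ℕ)+1) else 0) := by
          rw [Finset.sum_sub_distrib, Finset.sum_mul]
      _ = ∑ i : Fin n, (if (i:ℕ) ≤ (j:ℕ) then g i else 0) := by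
          rw [hsum0, zero_mul, zero_sub, ← Finset.sum_neg_distrib]
          refine Finset.sum_congr rfl fun i _ => ?_
          by_cases h : (i:ℕ) ≤ (j:ℕ) <;> simp [h, hg] <;> ring
  -- upper bound
  have upper : ∀ j : Fin n, (∑ i, (μ i - ν i) * ET i j) ≤ 2 ^ n := by
    intro j
    rw [key j]
    calc ∑ i : Fin n, (if (i:ℕ) ≤ (j:ℕ) then g i else 0)
        ≤ ∑ i : Fin n, ν i * 2 ^ n := by
          apply Finset.sum_le_sum
          intro i _
          have hle : ((i:ℕ)+1) ≤ n := i.isLt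
          have h2 : (2:ℝ) ^ ((i:ℕ)+1) ≤ 2 ^ n := by
            apply pow_le_pow_right₀ (by norm_num) hle
          by_cases h : (i:ℕ) ≤ (j:ℕ)
          · simp only [h, if_true, hg]
            have hstep : (ν i - μ i) * 2 ^ ((i:ℕ)+1) ≤ ν i * 2 ^ ((i:ℕ)+1) := by
              apply mul_le_mul_of_nonneg_right _ (by positivity)
              linarith [hμ0 i]
            exact hstep.trans (mul_le_mul_of_nonneg_left h2 (hν0 i))
          · simp only [h, if_false]
            exact mul_nonneg (hν0 i) (by positivity)
      _ = 2 ^ n := by rw [← Finset.sum_mul, hν1, one_mul]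
  -- value at the last state equals D
  have hD : (∑ i, ν i * (2:ℝ) ^ ((i:ℕ)+1)) - ∑ i, μ i * (2:ℝ) ^ ((i:ℕ)+1) = ∑ i, g i := by
    rw [← Finset.sum_sub_distrib]
    exact Finset.sum_congr rfl fun i _ => by rw [hg]; ring
  have hlastmem : (⟨n - 1, by omega⟩ : Fin n) ∈ (univ : Finset (Fin n)) := mem_univ _
  have hflast : (∑ i, (μ i - ν i) * ET i ⟨n - 1, by omega⟩) = ∑ i, g i := by
    rw [key]
    refine Finset.sum_congr rfl fun i _ => ?_
    have hi : (i:ℕ) ≤ n - 1 := by have := i.isLt; omega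
    simp [hi]
  -- weights for nonnegativity
  set W : ℕ → ℝ := fun k => if k = n - 1 then 2 else 2 ^ (n - 1 - k) with hW
  have hWpos : ∀ k, 0 < W k := by
    intro k; rw [hW]; dsimp only; split <;> positivity
  have tail : ∀ i : Fin n,
      (∑ j : Fin n, if (i:ℕ) ≤ (j:ℕ) then W (j:ℕ) else 0) = 2 ^ (n - (i:ℕ)) := by
    intro i
    have hi : (i:ℕ) ≤ n - 1 := by have := i.isLt; omega
    rw [Fin.sum_univ_eq_sum_range (fun k => if (i:ℕ) ≤ k then W k else 0) n]
    rw [← Finset.sum_filter]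
    have hfil : (Finset.range n).filter (fun k => (i:ℕ) ≤ k) = Finset.Ico (i:ℕ) n := by
      ext k; simp [Finset.mem_filter, Finset.mem_Ico, Finset.mem_range, and_comm]
    rw [hfil]
    have hIco : Finset.Ico (i:ℕ) n = Finset.Ico (i:ℕ) ((n-1)+1) := by
      congr 1; omega
    rw [hIco, Finset.sum_Ico_succ_top (by omega : (i:ℕ) ≤ n - 1)]
    have hWe : ∀ k ∈ Finset.Ico (i:ℕ) (n-1), W k = 2 ^ (n - 1 - k) := by
      intro k hk
      rw [Finset.mem_Ico] at hk
      rw [hW]; dsimp only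
      rw [if_neg (by omega)]
    rw [Finset.sum_congr rfl hWe]
    rw [Finset.sum_Ico_eq_sum_range]
    have hWl : W (n-1) = 2 := by rw [hW]; simp
    rw [hWl]
    have hre : ∀ l ∈ Finset.range (n - 1 - (i:ℕ)), (2:ℝ) ^ (n - 1 - ((i:ℕ) + l))
        = 2 ^ ((n - 1 - (i:ℕ)) - l) := by
      intro l hl; congr 1; omega
    rw [Finset.sum_congr rfl hre, geom_tail_sum]
    have hexp : (n - 1 - (i:ℕ)) + 1 = n - (i:ℕ) := by omega
    rw [hexp]
    ring
  -- exchange of sums: weighted combination is zero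
  have exch : (∑ j : Fin n, W (j:ℕ) * (∑ i, (μ i - ν i) * ET i j)) = 0 := by
    have step : ∀ j : Fin n, W (j:ℕ) * (∑ i, (μ i - ν i) * ET i j)
        = ∑ i : Fin n, (if (i:ℕ) ≤ (j:ℕ) then W (j:ℕ) * g i else 0) := by
      intro j
      rw [key j, Finset.mul_sum]
      exact Finset.sum_congr rfl fun i _ => by split <;> simp
    rw [Finset.sum_congr rfl fun j _ => step j, Finset.sum_comm]
    have inner : ∀ i : Fin n, (∑ j : Fin n, if (i:ℕ) ≤ (j:ℕ) then W (j:ℕ) * g i else 0)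
        = (ν i - μ i) * 2 ^ (n + 1) := by
      intro i
      have h1 : (∑ j : Fin n, if (i:ℕ) ≤ (j:ℕ) then W (j:ℕ) * g i else 0)
          = (∑ j : Fin n, if (i:ℕ) ≤ (j:ℕ) then W (j:ℕ) else 0) * g i := by
        rw [Finset.sum_mul]
        exact Finset.sum_congr rfl fun j _ => by split <;> simp
      rw [h1, tail i, hg]
      have h2 : (2:ℝ) ^ (n - (i:ℕ)) * (2:ℝ) ^ ((i:ℕ) + 1) = 2 ^ (n + 1) := by
        rw [← pow_add]
        congr 1
        have := i.isLt
        omega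
      calc (2:ℝ) ^ (n - (i:ℕ)) * ((ν i - μ i) * 2 ^ ((i:ℕ) + 1))
          = (ν i - μ i) * ((2:ℝ) ^ (n - (i:ℕ)) * 2 ^ ((i:ℕ) + 1)) := by ring
        _ = (ν i - μ i) * 2 ^ (n + 1) := by rw [h2]
    rw [Finset.sum_congr rfl fun i _ => inner i, ← Finset.sum_mul,
      Finset.sum_sub_distrib, hμ1, hν1]
    ring
  -- nonnegativity of the sup
  have hzero : (0:ℝ) ≤ univ.sup' ⟨⟨0, hn⟩, mem_univ _⟩
      (fun j => ∑ i, (μ i - ν i) * ET i j) := by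
    by_contra hcon
    push_neg at hcon
    have hall : ∀ j : Fin n, (∑ i, (μ i - ν i) * ET i j) < 0 := fun j =>
      lt_of_le_of_lt (Finset.le_sup' (fun j => ∑ i : Fin n, (μ i - ν i) * ET i j) (mem_univ j)) hcon
    have hlt : (∑ j : Fin n, W (j:ℕ) * (∑ i, (μ i - ν i) * ET i j)) < ∑ j : Fin n, (0:ℝ) := by
      apply Finset.sum_lt_sum_of_nonempty ⟨⟨0, hn⟩, mem_univ _⟩
      intro j _
      exact mul_neg_of_pos_of_neg (hWpos _) (hall j)
    rw [exch] at hlt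
    simp at hlt
  constructor
  · apply max_le _ hzero
    rw [hD, ← hflast]
    exact Finset.le_sup' (fun j => ∑ i : Fin n, (μ i - ν i) * ET i j) hlastmem
  · exact Finset.sup'_le _ _ fun j _ => upper j
end

section
/- For the winning streak Markov chain on {1,…,n} with n > 1, taking μ = δ_1 (the Dirac mass at 1) and ν with ν_i = 1/(2(n−1)) for 1 ≤ i ≤ n−1 and ν_n = 1/2, the access time equals H(μ,ν) = (2^{n−1} − 1)/(n−1) + 2^{n−1} − 2; in particular the worst-case access time of the winning streak chain grows like 2^n. -/
open Finset

/-- For the winning streak Markov chain on `{1,…,n}` with `n > 1`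
(state `k : Fin n` represents the integer `k+1`), with `μ = δ_1` and
`ν_i = 1/(2(n−1))` for `1 ≤ i ≤ n−1`, `ν_n = 1/2`, the access time equals
`H(μ,ν) = (2^{n−1} − 1)/(n−1) + 2^{n−1} − 2`, which is of order `2^n`. -/
theorem winning_streak_access_time_example
    (n : ℕ) (hn : 1 < n)
    (ET : Fin n → Fin n → ℝ)
    (hET : ∀ i j : Fin n, ET i j =
      if (i : ℕ) < (j : ℕ) then 2 ^ ((j : ℕ) + 1) - 2 ^ ((i : ℕ) + 1)
      else if (j : ℕ) < (i : ℕ) then 2 ^ ((j : ℕ) + 1)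
      else 0)
    (μ ν : Fin n → ℝ)
    (hμ : ∀ i : Fin n, μ i = if (i : ℕ) = 0 then 1 else 0)
    (hν : ∀ i : Fin n, ν i =
      if (i : ℕ) = n - 1 then 1 / 2 else 1 / (2 * ((n : ℝ) - 1))) :
    univ.sup' ⟨⟨0, Nat.lt_of_lt_of_le Nat.one_pos hn.le⟩, mem_univ _⟩
        (fun j => ∑ i, (μ i - ν i) * ET i j)
      = ((2 : ℝ) ^ (n - 1) - 1) / ((n : ℝ) - 1) + 2 ^ (n - 1) - 2 := by
  have hn1 : (1:ℝ) < (n:ℝ) := by exact_mod_cast hn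
  have hpos : (0:ℝ) < (n:ℝ) - 1 := by linarith
  have hne : ((n:ℝ) - 1) ≠ 0 := ne_of_gt hpos
  set c : ℝ := 1 / (2 * ((n : ℝ) - 1)) with hc
  have hcval : ((n:ℝ) - 1) * c = 1/2 := by
    rw [hc]; field_simp
  set w : ℕ → ℝ := fun i => (if i = 0 then (1:ℝ) else 0) - (if i = n-1 then 1/2 else c) with hw
  have hgeom : ∀ J : ℕ, ∑ i ∈ range J, (2:ℝ)^(i+1) = 2^(J+1) - 2 := by
    intro J
    induction J with
    | zero => simp
    | succ m ih => rw [Finset.sum_range_succ, ih]; ring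
  -- raw formula
  have key0 : ∀ j : Fin n, (∑ i, (μ i - ν i) * ET i j)
      = 2^((j:ℕ)+1) * (- w (j:ℕ))
        - ((if 0 < (j:ℕ) then 2 else 0) - c * (2^((j:ℕ)+1) - 2)) := by
    intro j
    set J := (j:ℕ) with hJdef
    have hJ : J < n := j.isLt
    have step1 : (∑ i, (μ i - ν i) * ET i j)
        = ∑ i ∈ range n, w i * (if i < J then (2:ℝ)^(J+1) - 2^(i+1)
            else if J < i then 2^(J+1) else 0) := by
      rw [← Fin.sum_univ_eq_sum_range
        (fun i => w i * (if i < J then (2:ℝ)^(J+1) - 2^(i+1)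
            else if J < i then 2^(J+1) else 0)) n]
      apply Finset.sum_congr rfl
      intro i _
      rw [hμ, hν, hET, hw]
    rw [step1]
    have step2 : ∀ i ∈ range n, w i * (if i < J then (2:ℝ)^(J+1) - 2^(i+1)
            else if J < i then 2^(J+1) else 0)
        = w i * 2^(J+1) - (if i = J then w i * 2^(J+1) else 0)
          - (if i < J then w i * 2^(i+1) else 0) := by
      intro i _
      rcases lt_trichotomy i J with h | h | h
      · rw [if_pos h, if_neg h.ne, if_pos h]; ring
      · rw [if_neg (by omega), if_neg (by omega), if_pos h, if_neg (by omega)]; ring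
      · rw [if_neg (by omega), if_pos h, if_neg (by omega), if_neg (by omega)]; ring
    rw [Finset.sum_congr rfl step2, Finset.sum_sub_distrib, Finset.sum_sub_distrib,
      ← Finset.sum_mul]
    have hwsum : ∑ i ∈ range n, w i = 0 := by
      simp only [hw]
      rw [Finset.sum_sub_distrib]
      have h1 : ∑ i ∈ range n, (if i = 0 then (1:ℝ) else 0) = 1 := by
        rw [Finset.sum_ite_eq' (range n) 0 (fun _ => (1:ℝ)),
          if_pos (by simp [Finset.mem_range]; omega : 0 ∈ range n)]
      have h2 : ∑ i ∈ range n, (if i = n-1 then (1/2:ℝ) else c) = 1 := by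
        have hsplit : ∀ i ∈ range n, (if i = n-1 then (1/2:ℝ) else c)
            = c + (if i = n-1 then 1/2 - c else 0) := by
          intro i _; split_ifs <;> ring
        rw [Finset.sum_congr rfl hsplit, Finset.sum_add_distrib,
          Finset.sum_ite_eq' (range n) (n-1) (fun _ => (1/2:ℝ) - c),
          Finset.sum_const, Finset.card_range,
          if_pos (by simp [Finset.mem_range]; omega : n-1 ∈ range n), nsmul_eq_mul]
        linear_combination hcval
      rw [h1, h2]; ring
    have e2 : ∑ i ∈ range n, (if i = J then w i * 2^(J+1) else 0) = w J * 2^(J+1) := by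
      rw [Finset.sum_ite_eq' (range n) J (fun i => w i * 2^(J+1))]
      simp [Finset.mem_range, hJ]
    have e3 : ∑ i ∈ range n, (if i < J then w i * 2^(i+1) else 0)
        = (if 0 < J then (2:ℝ) else 0) - c * (2^(J+1) - 2) := by
      rw [← Finset.sum_subset (Finset.range_subset_range.mpr hJ.le)
        (fun x _ hx => if_neg (by simpa using hx))]
      have hpt : ∀ i ∈ range J, (if i < J then w i * 2^(i+1) else 0)
          = (if i = 0 then (2:ℝ)^(i+1) else 0) - c * 2^(i+1) := by
        intro i hi
        rw [Finset.mem_range] at hi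
        have hni : i ≠ n - 1 := by omega
        rw [if_pos hi]
        simp only [hw, hni, if_false]
        split_ifs <;> ring
      rw [Finset.sum_congr rfl hpt, Finset.sum_sub_distrib,
        Finset.sum_ite_eq' (range J) 0 (fun i => (2:ℝ)^(i+1)),
        ← Finset.mul_sum, hgeom J]
      simp [Finset.mem_range]
    rw [hwsum, e2, e3]; ring
  -- closed form
  have key : ∀ j : Fin n, (∑ i, (μ i - ν i) * ET i j)
      = if (j:ℕ) = n-1 then ((2:ℝ)^(n-1) - 1)/((n:ℝ)-1) + 2^(n-1) - 2
        else ((2:ℝ)^((j:ℕ)+1) - 1)/((n:ℝ)-1) - 2 := by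
    intro j
    rw [key0 j]
    by_cases h : (j:ℕ) = n-1
    · rw [if_pos h]
      have hj0 : ¬ (j:ℕ) = 0 := by omega
      have hjpos : 0 < (j:ℕ) := by omega
      have h3 : (2:ℝ)^((j:ℕ)+1) = 2 * 2^(n-1) := by
        have h1 : (j:ℕ) + 1 = (n-1) + 1 := by omega
        rw [h1, pow_succ]; ring
      simp only [hw]
      rw [if_pos hjpos, if_neg hj0, if_pos h, h3, hc]
      field_simp
      ring
    · rw [if_neg h]
      simp only [hw]
      rcases Nat.eq_zero_or_pos (j:ℕ) with h0 | h0
      · simp only [h0, if_true, eq_self_iff_true]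
        rw [if_neg (show ¬(0:ℕ) = n-1 by omega), if_neg (lt_irrefl 0), hc]
        field_simp
        ring
      · rw [if_pos h0, if_neg (by omega : ¬ (j:ℕ) = 0), if_neg h, hc]
        field_simp
        ring
  apply le_antisymm
  · apply Finset.sup'_le
    intro j _
    rw [key j]
    split_ifs with h
    · exact le_refl _
    · have hj1 : (j:ℕ) + 1 ≤ n - 1 := by have := j.isLt; omega
      have hB : (2:ℝ)^((j:ℕ)+1) ≤ 2^(n-1) := by
        apply pow_le_pow_right₀ (by norm_num) hj1
      have hA : (2:ℝ) ≤ 2^(n-1) := by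
        calc (2:ℝ) = 2^1 := by norm_num
        _ ≤ 2^(n-1) := pow_le_pow_right₀ (by norm_num) (by omega)
      have hdiv : ((2:ℝ)^((j:ℕ)+1) - 1)/((n:ℝ)-1) ≤ ((2:ℝ)^(n-1) - 1)/((n:ℝ)-1) := by
        gcongr
      linarith
  · have hm : (⟨n-1, by omega⟩ : Fin n) ∈ (univ : Finset (Fin n)) := mem_univ _
    have := Finset.le_sup' (f := fun j => ∑ i, (μ i - ν i) * ET i j) hm
    rw [key ⟨n-1, by omega⟩] at this
    simpa using this
end

section
/- For the simple random walk on a connected graph G = (V,E) with n := |V| vertices, the access time satisfies H(μ,ν) ≤ n(n−1)² for all probability distributions μ, ν on V. -/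
open Finset

section Aux

set_option linter.unusedSectionVars false

variable {V : Type*} [Fintype V] [DecidableEq V] [Nonempty V]
variable {G : SimpleGraph V} [DecidableRel G.Adj]
variable {P : V → V → ℝ}

lemma aux_Pnonneg (hP : ∀ i j, P i j = if G.Adj i j then 1 / (G.degree i : ℝ) else 0)
    (i k : V) : 0 ≤ P i k := by
  rw [hP]; split
  · positivity
  · exact le_refl 0

lemma aux_sum_P (hP : ∀ i j, P i j = if G.Adj i j then 1 / (G.degree i : ℝ) else 0)
    (f : V → ℝ) (i : V) :
    ∑ k, P i k * f k = (∑ k ∈ G.neighborFinset i, f k) / (G.degree i : ℝ) := by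
  rw [SimpleGraph.neighborFinset_eq_filter, Finset.sum_filter, Finset.sum_div]
  refine Finset.sum_congr rfl fun k _ => ?_
  rw [hP]
  split
  · rw [one_div, inv_mul_eq_div]
  · rw [zero_mul, zero_div]

lemma aux_row_sum (hP : ∀ i j, P i j = if G.Adj i j then 1 / (G.degree i : ℝ) else 0)
    (i : V) (hd : 0 < G.degree i) : ∑ k, P i k = 1 := by
  have h := aux_sum_P hP (fun _ => (1 : ℝ)) i
  simp only [mul_one] at h
  rw [h, Finset.sum_const, SimpleGraph.card_neighborFinset_eq_degree]
  have : (G.degree i : ℝ) ≠ 0 := by positivity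
  field_simp
  simp

/-- Minimum principle: a function superharmonic off a set `B`, nonnegative on `B`,
is nonnegative everywhere. -/
lemma aux_min_principle (hG : G.Connected)
    (hP : ∀ i j, P i j = if G.Adj i j then 1 / (G.degree i : ℝ) else 0)
    (B : Finset V) (f : V → ℝ) (b0 : V) (hb0 : b0 ∈ B)
    (hfB : ∀ b ∈ B, 0 ≤ f b)
    (hf : ∀ i, i ∉ B → ∑ k, P i k * f k ≤ f i) (i : V) : 0 ≤ f i := by
  obtain ⟨i0, -, hi0⟩ := Finset.exists_mem_eq_inf' univ_nonempty f
  set m := univ.inf' univ_nonempty f with hm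
  have hmle : ∀ v, m ≤ f v := fun v => Finset.inf'_le f (mem_univ v)
  suffices h : 0 ≤ m from le_trans h (hmle i)
  have key : ∀ u w, G.Walk u w → w ∈ B → f u = m → ∃ c ∈ B, f c = m := by
    intro u w p
    induction p with
    | nil => intro hw hu; exact ⟨_, hw, hu⟩
    | @cons u v w h q ih =>
      intro hw hu
      by_cases huB : u ∈ B
      · exact ⟨u, huB, hu⟩
      · refine ih hw ?_
        have hdeg : 0 < G.degree u := by
          rw [← SimpleGraph.card_neighborFinset_eq_degree]
          exact Finset.card_pos.mpr ⟨v, (SimpleGraph.mem_neighborFinset G u v).mpr h⟩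
        have hsum1 : ∑ k, P u k = 1 := aux_row_sum hP u hdeg
        have h2 : ∀ k ∈ univ, 0 ≤ P u k * (f k - m) :=
          fun k _ => mul_nonneg (aux_Pnonneg hP u k) (by linarith [hmle k])
        have h1 : ∑ k, P u k * (f k - m) = 0 := by
          have e : ∑ k, P u k * (f k - m) = (∑ k, P u k * f k) - m := by
            simp only [mul_sub]
            rw [Finset.sum_sub_distrib, ← Finset.sum_mul, hsum1, one_mul]
          have h3 := hf u huB
          have hge := Finset.sum_nonneg h2
          rw [e] at hge ⊢
          linarith [hu ▸ h3]
        have hz := (Finset.sum_eq_zero_iff_of_nonneg h2).mp h1 v (mem_univ v)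
        have hPuv : 0 < P u v := by
          rw [hP]; simp only [h, if_true]; positivity
        rcases mul_eq_zero.mp hz with h' | h'
        · exact absurd h' (ne_of_gt hPuv)
        · linarith
  obtain ⟨c, hc, hcm⟩ := key i0 b0 (hG.preconnected i0 b0).some hb0 hi0.symm
  exact hcm ▸ hfB c hc

end Aux

/-- For the simple random walk on a connected graph `G` on `n` vertices
(with transition probabilities `1/deg i` to each neighbor and mean hitting times `ET`
characterized by the first-step equations), the access time
`H(μ,ν) = max_j Σ_i (μ_i − ν_i) E_i[τ_j]` satisfies `H(μ,ν) ≤ n(n−1)²`. -/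
theorem rw_connected_graph_access_time_bound
    {V : Type*} [Fintype V] [DecidableEq V] [Nonempty V]
    (G : SimpleGraph V) [DecidableRel G.Adj] (hG : G.Connected)
    (P : V → V → ℝ)
    (hP : ∀ i j, P i j = if G.Adj i j then 1 / (G.degree i : ℝ) else 0)
    (ET : V → V → ℝ)
    (hET_diag : ∀ j, ET j j = 0)
    (hET_step : ∀ i j, i ≠ j → ET i j = 1 + ∑ k, P i k * ET k j)
    (μ ν : V → ℝ)
    (hμ0 : ∀ i, 0 ≤ μ i) (hμ1 : ∑ i, μ i = 1)
    (hν0 : ∀ i, 0 ≤ ν i) (hν1 : ∑ i, ν i = 1) :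
    univ.sup' univ_nonempty (fun j => ∑ i, (μ i - ν i) * ET i j)
      ≤ (Fintype.card V : ℝ) * ((Fintype.card V : ℝ) - 1) ^ 2 := by
  -- Nonnegativity of hitting times
  have hET0 : ∀ i j, 0 ≤ ET i j := by
    intro i j
    refine aux_min_principle hG hP {j} (fun i => ET i j) j (mem_singleton_self j) ?_ ?_ i
    · intro b hb; rw [mem_singleton] at hb; subst hb
      exact (hET_diag _).ge
    · intro i hi
      rw [mem_singleton] at hi
      show ∑ k, P i k * ET k j ≤ ET i j
      rw [hET_step i j hi]; linarith
  set n : ℝ := (Fintype.card V : ℝ) with hn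
  -- case n = 1
  rcases eq_or_lt_of_le (show 1 ≤ Fintype.card V from Fintype.card_pos (α := V)) with h1 | h2
  · have hsub : ∀ i j : V, i = j := fun i j =>
      Fintype.card_le_one_iff.mp (by omega) i j
    refine Finset.sup'_le _ _ fun j _ => ?_
    have hz : ∑ i, (μ i - ν i) * ET i j = 0 :=
      Finset.sum_eq_zero fun i _ => by rw [hsub i j, hET_diag, mul_zero]
    rw [hz]
    positivity
  -- now 2 ≤ card V
  have hcard2 : 2 ≤ Fintype.card V := h2
  -- every vertex has positive degree
  have hdegpos : ∀ i : V, 0 < G.degree i := by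
    intro i
    obtain ⟨w, hw⟩ := Fintype.exists_ne_of_one_lt_card (by omega) i
    obtain ⟨p⟩ := hG.preconnected i w
    rw [← SimpleGraph.card_neighborFinset_eq_degree]
    cases p with
    | nil => exact absurd rfl hw.symm
    | cons h q =>
      exact Finset.card_pos.mpr ⟨_, (SimpleGraph.mem_neighborFinset G i _).mpr h⟩
  set D : ℝ := ∑ i, (G.degree i : ℝ) with hD
  -- Kac-type identity: sum of hitting times from the neighbors of j
  have hkac : ∀ j : V, ∑ k ∈ G.neighborFinset j, ET k j = D - (G.degree j : ℝ) := by
    intro j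
    set f : V → ℝ := fun i => ET i j with hf
    have hA : ∀ i, i ≠ j →
        (G.degree i : ℝ) * f i = (G.degree i : ℝ) + ∑ k ∈ G.neighborFinset i, f k := by
      intro i hi
      have h := hET_step i j hi
      rw [aux_sum_P hP (fun k => ET k j) i] at h
      have hd : (G.degree i : ℝ) ≠ 0 := by
        have := hdegpos i; positivity
      field_simp at h
      show (G.degree i : ℝ) * ET i j = _
      linarith
    have hswap : ∑ i, ∑ k ∈ G.neighborFinset i, f k = ∑ i, (G.degree i : ℝ) * f i := by
      have e1 : ∀ i : V, ∑ k ∈ G.neighborFinset i, f k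
          = ∑ k, if G.Adj i k then f k else 0 := by
        intro i
        rw [SimpleGraph.neighborFinset_eq_filter, Finset.sum_filter]
      simp only [e1]
      rw [Finset.sum_comm]
      refine Finset.sum_congr rfl fun k _ => ?_
      have e2 : ∑ i, (if G.Adj i k then f k else 0) = ∑ i, (if G.Adj k i then f k else 0) :=
        Finset.sum_congr rfl fun i _ => by
          by_cases h : G.Adj i k
          · rw [if_pos h, if_pos (h.symm)]
          · rw [if_neg h, if_neg (fun h' => h h'.symm)]
      rw [e2]
      rw [← Finset.sum_filter, ← SimpleGraph.neighborFinset_eq_filter,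
        Finset.sum_const, SimpleGraph.card_neighborFinset_eq_degree, nsmul_eq_mul]
    have e2 : ∑ i ∈ univ.erase j, (G.degree i : ℝ) * f i = ∑ i, (G.degree i : ℝ) * f i := by
      refine Finset.sum_erase _ ?_
      show (G.degree j : ℝ) * ET j j = 0
      rw [hET_diag, mul_zero]
    have e3 : ∑ i ∈ univ.erase j, (G.degree i : ℝ) * f i
        = ∑ i ∈ univ.erase j, (G.degree i : ℝ)
          + ∑ i ∈ univ.erase j, ∑ k ∈ G.neighborFinset i, f k := by
      rw [← Finset.sum_add_distrib]
      exact Finset.sum_congr rfl fun i hi => hA i (Finset.ne_of_mem_erase hi)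
    have e4 : ∑ i ∈ univ.erase j, ∑ k ∈ G.neighborFinset i, f k
        = (∑ i, ∑ k ∈ G.neighborFinset i, f k) - ∑ k ∈ G.neighborFinset j, f k :=
      Finset.sum_erase_eq_sub (mem_univ j)
    have e5 : ∑ i ∈ univ.erase j, (G.degree i : ℝ) = D - (G.degree j : ℝ) :=
      Finset.sum_erase_eq_sub (mem_univ j)
    rw [e3, e4, e5, hswap] at e2
    linarith
  -- for adjacent vertices, hitting time is at most D - 1
  have hadj : ∀ k j : V, G.Adj k j → ET k j ≤ D - 1 := by
    intro k j hkj
    have hk : k ∈ G.neighborFinset j := (SimpleGraph.mem_neighborFinset G j k).mpr hkj.symm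
    have h1 : ET k j ≤ ∑ k' ∈ G.neighborFinset j, ET k' j :=
      Finset.single_le_sum (fun i _ => hET0 i j) hk
    have h2 : (1 : ℝ) ≤ (G.degree j : ℝ) := by
      exact_mod_cast hdegpos j
    rw [hkac j] at h1
    linarith
  -- triangle inequality for hitting times
  have htri : ∀ i k j : V, ET i j ≤ ET i k + ET k j := by
    intro i k j
    have := aux_min_principle hG hP {k, j} (fun i => ET i k + ET k j - ET i j) k
      (by simp) ?_ ?_ i
    · linarith
    · intro b hb
      rcases Finset.mem_insert.mp hb with hb | hb
      · show (0 : ℝ) ≤ ET b k + ET k j - ET b j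
        rw [hb, hET_diag]
        linarith
      · rw [mem_singleton] at hb
        show (0 : ℝ) ≤ ET b k + ET k j - ET b j
        rw [hb, hET_diag]
        have h1 := hET0 j k; have h2 := hET0 k j
        linarith
    · intro i hi
      simp only [Finset.mem_insert, mem_singleton, not_or] at hi
      obtain ⟨hik, hij⟩ := hi
      show ∑ l, P i l * (ET l k + ET k j - ET l j) ≤ ET i k + ET k j - ET i j
      have hsum1 : ∑ l, P i l = 1 := aux_row_sum hP i (hdegpos i)
      have e : ∑ l, P i l * (ET l k + ET k j - ET l j)
          = (∑ l, P i l * ET l k) + ET k j - ∑ l, P i l * ET l j := by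
        have : ∀ l, P i l * (ET l k + ET k j - ET l j)
            = P i l * ET l k + P i l * ET k j - P i l * ET l j := fun l => by ring
        simp only [this]
        rw [Finset.sum_sub_distrib, Finset.sum_add_distrib, ← Finset.sum_mul, hsum1, one_mul]
      rw [e, hET_step i k hik, hET_step i j hij]
      linarith
  -- bound along a walk
  have hwalk : ∀ (i j : V) (p : G.Walk i j), ET i j ≤ (p.length : ℝ) * (D - 1) := by
    intro i j p
    induction p with
    | nil => simp [hET_diag]
    | @cons u v w h q ih =>
      have h1 := htri u v w
      have h2 := hadj u v h
      rw [SimpleGraph.Walk.length_cons]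
      push_cast
      linarith
  -- degree sum bound
  have hDle : D ≤ n * (n - 1) := by
    rw [hD, hn]
    calc ∑ i, (G.degree i : ℝ) ≤ ∑ _i : V, ((Fintype.card V : ℝ) - 1) := by
          refine Finset.sum_le_sum fun i _ => ?_
          have h' : G.degree i + 1 ≤ Fintype.card V := G.degree_lt_card_verts i
          have h'' : (G.degree i : ℝ) + 1 ≤ (Fintype.card V : ℝ) := by exact_mod_cast h'
          linarith
      _ = (Fintype.card V : ℝ) * ((Fintype.card V : ℝ) - 1) := by
          rw [Finset.sum_const, Finset.card_univ, nsmul_eq_mul]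
  have hD1 : (1 : ℝ) ≤ D := by
    have h1 : (1 : ℝ) ≤ (G.degree (Classical.arbitrary V) : ℝ) := by
      exact_mod_cast hdegpos (Classical.arbitrary V)
    have h2 : ∀ i : V, (0 : ℝ) ≤ (G.degree i : ℝ) := fun i => by positivity
    calc (1 : ℝ) ≤ (G.degree (Classical.arbitrary V) : ℝ) := h1
      _ ≤ D := Finset.single_le_sum (fun i _ => h2 i) (mem_univ _)
  have hn2 : (2 : ℝ) ≤ n := by rw [hn]; exact_mod_cast hcard2
  -- uniform bound on hitting times
  have hETbound : ∀ i j : V, ET i j ≤ n * (n - 1) ^ 2 := by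
    intro i j
    obtain ⟨p⟩ := hG.preconnected i j
    have hlen : (p.toPath.1.length : ℝ) ≤ n - 1 := by
      have h3 : p.toPath.1.length + 1 ≤ Fintype.card V := p.toPath.2.length_lt
      have h4 : (p.toPath.1.length : ℝ) + 1 ≤ (Fintype.card V : ℝ) := by exact_mod_cast h3
      rw [hn]
      linarith
    have h1 := hwalk i j p.toPath.1
    have hlen0 : (0 : ℝ) ≤ (p.toPath.1.length : ℝ) := by positivity
    have h2 : (p.toPath.1.length : ℝ) * (D - 1) ≤ (n - 1) * (n * (n - 1) - 1) := by
      have hD1' : (0 : ℝ) ≤ D - 1 := by linarith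
      have := mul_le_mul hlen (by linarith : D - 1 ≤ n * (n - 1) - 1) hD1' (by linarith)
      linarith
    nlinarith
  -- final assembly
  refine Finset.sup'_le _ _ fun j _ => ?_
  have h1 : ∑ i, (μ i - ν i) * ET i j = (∑ i, μ i * ET i j) - ∑ i, ν i * ET i j := by
    rw [← Finset.sum_sub_distrib]
    exact Finset.sum_congr rfl fun i _ => by ring
  have h2 : (0 : ℝ) ≤ ∑ i, ν i * ET i j :=
    Finset.sum_nonneg fun i _ => mul_nonneg (hν0 i) (hET0 i j)
  have h3 : ∑ i, μ i * ET i j ≤ n * (n - 1) ^ 2 := by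
    calc ∑ i, μ i * ET i j ≤ ∑ i, μ i * (n * (n - 1) ^ 2) :=
          Finset.sum_le_sum fun i _ => mul_le_mul_of_nonneg_left (hETbound i j) (hμ0 i)
      _ = n * (n - 1) ^ 2 := by rw [← Finset.sum_mul, hμ1, one_mul]
  rw [h1]
  linarith
end

section
/- Let X be the simple random walk on a connected graph G = (V,E) with stationary distribution π and symmetric hitting times, i.e. E_i[τ_j] = E_j[τ_i] for all i, j ∈ V. Then the access time from π to any distribution ν satisfies H(π,ν) = t_av − min_{j ∈ V} Σ_{i ∈ V} ν_i E_i[τ_j], and in particular H(π,ν) ≤ t_av. -/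
set_option maxHeartbeats 1000000

open Finset

private lemma sum_ite_ne_aux {V : Type*} [Fintype V] [DecidableEq V] (j : V) (X : V → ℝ) :
    ∑ i, (if i = j then 0 else X i) = (∑ i, X i) - X j := by
  have h : ∀ i, (if i = j then (0:ℝ) else X i) = X i - (if i = j then X j else 0) := by
    intro i; by_cases h : i = j <;> simp [h]
  simp_rw [h]
  rw [Finset.sum_sub_distrib]
  simp

/-- For the simple random walk on a connected graph `G` with stationary
distribution `π_i = deg i / (2|E|)` and symmetric mean hitting times
(`E_i[τ_j] = E_j[τ_i]`), the access time from `π` to any distribution `ν` satisfies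
`H(π,ν) = t_av − min_j Σ_i ν_i E_i[τ_j]`, and in particular `H(π,ν) ≤ t_av`,
where `t_av = Σ_{i,j} π_i π_j E_i[τ_j]`. -/
theorem rw_symmetric_hitting_access_time_from_stationary
    {V : Type*} [Fintype V] [DecidableEq V] [Nonempty V]
    (G : SimpleGraph V) [DecidableRel G.Adj] (hG : G.Connected)
    (P : V → V → ℝ)
    (hP : ∀ i j, P i j = if G.Adj i j then 1 / (G.degree i : ℝ) else 0)
    (ET : V → V → ℝ)
    (hET_diag : ∀ j, ET j j = 0)
    (hET_step : ∀ i j, i ≠ j → ET i j = 1 + ∑ k, P i k * ET k j)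
    (hET_sym : ∀ i j, ET i j = ET j i)
    (π : V → ℝ)
    (hπ : ∀ i, π i = (G.degree i : ℝ) / (2 * (G.edgeFinset.card : ℝ)))
    (tav : ℝ)
    (htav : tav = ∑ i, ∑ j, π i * π j * ET i j)
    (ν : V → ℝ)
    (hν0 : ∀ i, 0 ≤ ν i) (hν1 : ∑ i, ν i = 1) :
    univ.sup' univ_nonempty (fun j => ∑ i, (π i - ν i) * ET i j)
      = tav - univ.inf' univ_nonempty (fun j => ∑ i, ν i * ET i j) ∧
    univ.sup' univ_nonempty (fun j => ∑ i, (π i - ν i) * ET i j) ≤ tav := by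
  -- trivial case: one vertex
  rcases subsingleton_or_nontrivial V with hV | hV
  · have hET0 : ∀ i j, ET i j = 0 := fun i j => Subsingleton.elim i j ▸ hET_diag i
    have h1 : (fun j => ∑ i, (π i - ν i) * ET i j) = fun _ => (0:ℝ) := by
      funext j; simp [hET0]
    have h2 : (fun j => ∑ i, ν i * ET i j) = fun _ => (0:ℝ) := by
      funext j; simp [hET0]
    have htav0 : tav = 0 := by simp [htav, hET0]
    rw [h1, h2, htav0]
    simp
  -- main case: degrees are positive
  have hdeg : ∀ i, 0 < G.degree i := by
    intro i
    rw [SimpleGraph.degree_pos_iff_exists_adj]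
    obtain ⟨j, hj⟩ := exists_ne i
    obtain ⟨w⟩ := hG.preconnected i j
    have hnil : ¬ w.Nil := SimpleGraph.Walk.not_nil_of_ne (Ne.symm hj)
    exact ⟨w.getVert 1, w.adj_snd hnil⟩
  have hPnn : ∀ i k, 0 ≤ P i k := by
    intro i k; rw [hP]; split
    · positivity
    · exact le_refl 0
  have hfilter : ∀ i, (univ.filter (fun k => G.Adj i k)).card = G.degree i := by
    intro i
    rw [SimpleGraph.degree]
    congr 1
    ext k
    simp [SimpleGraph.mem_neighborFinset]
  have hrow : ∀ i, ∑ k, P i k = 1 := by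
    intro i
    simp_rw [hP]
    rw [Finset.sum_ite, Finset.sum_const_zero, add_zero, Finset.sum_const, hfilter,
      nsmul_eq_mul]
    have : (G.degree i : ℝ) ≠ 0 := by exact_mod_cast (hdeg i).ne'
    field_simp
  -- sum of degrees
  have hm : (0:ℝ) < 2 * (G.edgeFinset.card : ℝ) := by
    have h0 : 0 < ∑ v, G.degree v :=
      Finset.sum_pos (fun v _ => hdeg v) univ_nonempty
    rw [G.sum_degrees_eq_twice_card_edges] at h0
    exact_mod_cast h0
  have hm' : (2 * (G.edgeFinset.card : ℝ)) ≠ 0 := ne_of_gt hm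
  have hπsum : ∑ i, π i = 1 := by
    simp_rw [hπ]
    rw [← Finset.sum_div, div_eq_one_iff_eq hm', ← Nat.cast_sum,
      G.sum_degrees_eq_twice_card_edges]
    push_cast
    ring
  -- reversibility: π P = π
  have hrev : ∀ k, ∑ i, π i * P i k = π k := by
    intro k
    have h : ∀ i, π i * P i k = if G.Adj k i then 1 / (2 * (G.edgeFinset.card : ℝ)) else 0 := by
      intro i
      rw [hπ, hP]
      by_cases h : G.Adj i k
      · rw [if_pos h, if_pos h.symm]
        have hd : (G.degree i : ℝ) ≠ 0 := by exact_mod_cast (hdeg i).ne'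
        rw [div_mul_div_comm, mul_one, mul_comm (2 * ((G.edgeFinset.card : ℕ) : ℝ)) _,
          ← div_div, div_self hd]
      · rw [if_neg h, if_neg (fun hh => h hh.symm), mul_zero]
    simp_rw [h]
    rw [Finset.sum_ite, Finset.sum_const_zero, add_zero, Finset.sum_const, hfilter,
      nsmul_eq_mul, hπ, mul_one_div]
  -- ET is nonnegative
  have hETnn : ∀ j i, 0 ≤ ET i j := by
    intro j i
    obtain ⟨i0, _, hi0⟩ := Finset.exists_mem_eq_inf' (univ_nonempty (α := V)) (fun i => ET i j)
    set m := univ.inf' univ_nonempty (fun i => ET i j) with hmdef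
    have hmle : ∀ k, m ≤ ET k j := fun k => Finset.inf'_le _ (Finset.mem_univ k)
    have hm0 : m = 0 := by
      by_cases hij : i0 = j
      · rw [hi0, hij, hET_diag]
      · exfalso
        have hcon : (1:ℝ) + m ≤ m := by
          calc (1:ℝ) + m = 1 + (∑ k, P i0 k) * m := by rw [hrow]; ring
          _ = 1 + ∑ k, P i0 k * m := by rw [Finset.sum_mul]
          _ ≤ 1 + ∑ k, P i0 k * ET k j := by
              gcongr with k
              · exact hPnn i0 k
              · exact hmle k
          _ = ET i0 j := (hET_step i0 j hij).symm
          _ = m := hi0.symm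
        linarith
    calc (0:ℝ) = m := hm0.symm
    _ ≤ ET i j := hmle i
  -- the "star" identity
  have hstar : ∀ j, π j * (∑ k, P j k * ET k j) = 1 - π j := by
    intro j
    have h1 : ∑ i, π i * ET i j
        = (∑ i, π i * (1 + ∑ k, P i k * ET k j)) - π j * (1 + ∑ k, P j k * ET k j) := by
      rw [← sum_ite_ne_aux j (fun i => π i * (1 + ∑ k, P i k * ET k j))]
      apply Finset.sum_congr rfl
      intro i _
      by_cases h : i = j
      · simp [h, hET_diag]
      · rw [if_neg h, hET_step i j h]
    have h2 : ∑ i, π i * (1 + ∑ k, P i k * ET k j) = 1 + ∑ i, π i * ET i j := by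
      simp_rw [mul_add, mul_one]
      rw [Finset.sum_add_distrib, hπsum]
      congr 1
      calc ∑ i, π i * ∑ k, P i k * ET k j
          = ∑ i, ∑ k, π i * P i k * (ET k j) := by
            apply Finset.sum_congr rfl; intro i _
            rw [Finset.mul_sum]; apply Finset.sum_congr rfl; intro k _; ring
        _ = ∑ k, ∑ i, π i * P i k * (ET k j) := Finset.sum_comm
        _ = ∑ k, (∑ i, π i * P i k) * ET k j := by
            apply Finset.sum_congr rfl; intro k _; rw [Finset.sum_mul]
        _ = ∑ k, π k * ET k j := by
            apply Finset.sum_congr rfl; intro k _; rw [hrev]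
    have h4 : π j * (1 + ∑ k, P j k * ET k j) = π j + π j * (∑ k, P j k * ET k j) := by
      ring
    linarith
  -- harmonicity of g
  have hharm : ∀ i, ∑ j, π j * ET i j = ∑ k, P i k * ∑ j, π j * ET k j := by
    intro i
    have h1 : ∑ j, π j * ET i j
        = (∑ j, π j * (1 + ∑ k, P i k * ET k j)) - π i * (1 + ∑ k, P i k * ET k i) := by
      rw [← sum_ite_ne_aux i (fun j => π j * (1 + ∑ k, P i k * ET k j))]
      apply Finset.sum_congr rfl
      intro j _
      by_cases h : j = i
      · simp [h, hET_diag]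
      · rw [if_neg h, hET_step i j (fun hh => h hh.symm)]
    have h2 : ∑ j, π j * (1 + ∑ k, P i k * ET k j)
        = 1 + ∑ k, P i k * ∑ j, π j * ET k j := by
      simp_rw [mul_add, mul_one]
      rw [Finset.sum_add_distrib, hπsum]
      congr 1
      calc ∑ j, π j * ∑ k, P i k * ET k j
          = ∑ j, ∑ k, P i k * (π j * ET k j) := by
            apply Finset.sum_congr rfl; intro j _
            rw [Finset.mul_sum]; apply Finset.sum_congr rfl; intro k _; ring
        _ = ∑ k, ∑ j, P i k * (π j * ET k j) := Finset.sum_comm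
        _ = ∑ k, P i k * ∑ j, π j * ET k j := by
            apply Finset.sum_congr rfl; intro k _
            rw [← Finset.mul_sum]
    have h3 : π i * (1 + ∑ k, P i k * ET k i) = 1 := by
      have h4 : π i * (1 + ∑ k, P i k * ET k i) = π i + π i * (∑ k, P i k * ET k i) := by
        ring
      have := hstar i
      linarith
    rw [h1, h2, h3]; ring
  -- maximum principle: g is constant
  have hgconst : ∀ i j, (∑ j', π j' * ET i j') = ∑ j', π j' * ET j j' := by
    obtain ⟨i0, _, hi0⟩ := Finset.exists_mem_eq_sup' (univ_nonempty (α := V))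
      (fun i => ∑ j', π j' * ET i j')
    set M := univ.sup' univ_nonempty (fun i => ∑ j', π j' * ET i j') with hM
    have hle : ∀ k, (∑ j', π j' * ET k j') ≤ M :=
      fun k => Finset.le_sup' (fun i => ∑ j', π j' * ET i j') (Finset.mem_univ k)
    have hadj : ∀ a b, G.Adj a b → (∑ j', π j' * ET a j') = M
        → (∑ j', π j' * ET b j') = M := by
      intro a b hab hga
      by_contra hgb
      have hgb' : (∑ j', π j' * ET b j') < M := lt_of_le_of_ne (hle b) hgb
      have hlt : (∑ k, P a k * ∑ j', π j' * ET k j') < ∑ k, P a k * M := by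
        apply Finset.sum_lt_sum
        · intro k _; exact mul_le_mul_of_nonneg_left (hle k) (hPnn a k)
        · refine ⟨b, Finset.mem_univ b, ?_⟩
          have hPab : 0 < P a b := by
            rw [hP, if_pos hab]
            have : (0:ℝ) < (G.degree a : ℝ) := by exact_mod_cast hdeg a
            positivity
          exact mul_lt_mul_of_pos_left hgb' hPab
      rw [← hharm a, hga] at hlt
      have heq : ∑ k, P a k * M = M := by
        rw [← Finset.sum_mul, hrow, one_mul]
      rw [heq] at hlt
      exact lt_irrefl M hlt
    have hwalk : ∀ a b (w : G.Walk a b), (∑ j', π j' * ET a j') = M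
        → (∑ j', π j' * ET b j') = M := by
      intro a b w
      induction w with
      | nil => exact id
      | cons h p ih => intro ha; exact ih (hadj _ _ h ha)
    have hallM : ∀ i, (∑ j', π j' * ET i j') = M := by
      intro i
      obtain ⟨w⟩ := hG.preconnected i0 i
      exact hwalk i0 i w hi0.symm
    intro i j; rw [hallM i, hallM j]
  have htavg : ∀ j, (∑ j', π j' * ET j j') = tav := by
    intro j
    have e1 : ∑ i, ∑ j', π i * π j' * ET i j' = ∑ i, π i * ∑ j', π j' * ET i j' := by
      apply Finset.sum_congr rfl; intro i _
      rw [Finset.mul_sum]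
      apply Finset.sum_congr rfl; intro j' _; ring
    have e2 : ∑ i, π i * ∑ j', π j' * ET i j' = ∑ i, π i * ∑ j', π j' * ET j j' := by
      apply Finset.sum_congr rfl; intro i _; rw [hgconst i j]
    rw [htav, e1, e2, ← Finset.sum_mul, hπsum, one_mul]
  -- key identity: ∑ i, π i * ET i j = tav
  have hkey : ∀ j, ∑ i, π i * ET i j = tav := by
    intro j
    rw [← htavg j]
    apply Finset.sum_congr rfl
    intro i _
    rw [hET_sym]
  -- rewrite the sup'
  have hfun : ∀ j, ∑ i, (π i - ν i) * ET i j = tav - ∑ i, ν i * ET i j := by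
    intro j
    simp_rw [sub_mul]
    rw [Finset.sum_sub_distrib, hkey j]
  have hrewrite : univ.sup' univ_nonempty (fun j => ∑ i, (π i - ν i) * ET i j)
      = univ.sup' univ_nonempty (fun j => tav - ∑ i, ν i * ET i j) := by
    apply Finset.sup'_congr _ rfl
    intro j _; exact hfun j
  have hsupinf : univ.sup' univ_nonempty (fun j => tav - ∑ i, ν i * ET i j)
      = tav - univ.inf' univ_nonempty (fun j => ∑ i, ν i * ET i j) := by
    apply le_antisymm
    · apply Finset.sup'_le
      intro j _
      have h := Finset.inf'_le (fun j => ∑ i, ν i * ET i j) (Finset.mem_univ j)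
      linarith
    · obtain ⟨j0, _, hj0⟩ := Finset.exists_mem_eq_inf' (univ_nonempty (α := V))
        (fun j => ∑ i, ν i * ET i j)
      rw [hj0]
      exact Finset.le_sup' (fun j => tav - ∑ i, ν i * ET i j) (Finset.mem_univ j0)
  have hinfnn : 0 ≤ univ.inf' univ_nonempty (fun j => ∑ i, ν i * ET i j) := by
    apply Finset.le_inf'
    intro j _
    exact Finset.sum_nonneg fun i _ => mul_nonneg (hν0 i) (hETnn j i)
  constructor
  · rw [hrewrite, hsupinf]
  · rw [hrewrite, hsupinf]; linarith
end

section
/- Let X be the simple random walk on a connected graph G = (V,E) with stationary distribution π and symmetric hitting times, i.e. E_i[τ_j] = E_j[τ_i] for all i, j ∈ V. Then the access time from any distribution μ to π satisfies H(μ,π) = max_{j ∈ V} Σ_{i ∈ V} μ_i E_i[τ_j] − t_av, and in particular H(μ,π) ≤ max_{i,j ∈ V} E_i[τ_j] − t_av. -/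
open Finset

/-- For the simple random walk on a connected graph `G` with stationary
distribution `π_i = deg i / (2|E|)` and symmetric mean hitting times
(`E_i[τ_j] = E_j[τ_i]`), the access time from any distribution `μ` to `π` satisfies
`H(μ,π) = max_j Σ_i μ_i E_i[τ_j] − t_av`, and in particular
`H(μ,π) ≤ max_{i,j} E_i[τ_j] − t_av`, where `t_av = Σ_{i,j} π_i π_j E_i[τ_j]`. -/
theorem rw_symmetric_hitting_access_time_to_stationary
    {V : Type*} [Fintype V] [DecidableEq V] [Nonempty V]
    (G : SimpleGraph V) [DecidableRel G.Adj] (hG : G.Connected)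
    (P : V → V → ℝ)
    (hP : ∀ i j, P i j = if G.Adj i j then 1 / (G.degree i : ℝ) else 0)
    (ET : V → V → ℝ)
    (hET_diag : ∀ j, ET j j = 0)
    (hET_step : ∀ i j, i ≠ j → ET i j = 1 + ∑ k, P i k * ET k j)
    (hET_sym : ∀ i j, ET i j = ET j i)
    (π : V → ℝ)
    (hπ : ∀ i, π i = (G.degree i : ℝ) / (2 * (G.edgeFinset.card : ℝ)))
    (tav : ℝ)
    (htav : tav = ∑ i, ∑ j, π i * π j * ET i j)
    (μ : V → ℝ)
    (hμ0 : ∀ i, 0 ≤ μ i) (hμ1 : ∑ i, μ i = 1) :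
    univ.sup' univ_nonempty (fun j => ∑ i, (μ i - π i) * ET i j)
      = univ.sup' univ_nonempty (fun j => ∑ i, μ i * ET i j) - tav ∧
    univ.sup' univ_nonempty (fun j => ∑ i, (μ i - π i) * ET i j)
      ≤ univ.sup' univ_nonempty (fun q : V × V => ET q.1 q.2) - tav := by
  classical
  -- the key fact: `S j := ∑ i, π i * ET i j` is constant, equal to `tav`.
  have key : ∀ j, (∑ i, π i * ET i j) = tav := by
    by_cases hnt : Nontrivial V
    · -- degrees positive
      have hdeg : ∀ v : V, 0 < G.degree v := by
        intro v
        obtain ⟨w, hw⟩ := exists_ne v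
        obtain ⟨p⟩ := hG.preconnected v w
        rw [G.degree_pos_iff_exists_adj]
        cases p with
        | nil => exact absurd rfl hw
        | cons h q => exact ⟨_, h⟩
      have hdegR : ∀ v : V, (0:ℝ) < (G.degree v : ℝ) := fun v => by
        exact_mod_cast hdeg v
      have hE2 : (0:ℝ) < 2 * (G.edgeFinset.card : ℝ) := by
        have h := G.sum_degrees_eq_twice_card_edges
        have : 0 < 2 * G.edgeFinset.card := by
          rw [← h]
          exact Finset.sum_pos (fun v _ => hdeg v) univ_nonempty
        exact_mod_cast this
      have hπpos : ∀ v, 0 < π v := fun v => by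
        rw [hπ]; exact div_pos (hdegR v) hE2
      have hπsum : ∑ i, π i = 1 := by
        simp only [hπ, ← Finset.sum_div]
        rw [div_eq_one_iff_eq (ne_of_gt hE2)]
        exact_mod_cast G.sum_degrees_eq_twice_card_edges
      have hPnn : ∀ i k, 0 ≤ P i k := by
        intro i k; rw [hP]; split
        · positivity
        · exact le_refl 0
      have hProw : ∀ i, ∑ k, P i k = 1 := by
        intro i
        simp only [hP]
        rw [Finset.sum_ite, Finset.sum_const_zero, add_zero, Finset.sum_const,
          nsmul_eq_mul]
        have hc : (Finset.univ.filter (fun k => G.Adj i k)).card = G.degree i := by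
          rw [← SimpleGraph.card_neighborFinset_eq_degree,
            SimpleGraph.neighborFinset_eq_filter]
        rw [hc, mul_one_div, div_self (ne_of_gt (hdegR i))]
      -- stationarity
      have hstat : ∀ k, ∑ i, π i * P i k = π k := by
        intro k
        have hterm : ∀ i, π i * P i k
            = if G.Adj i k then 1 / (2 * (G.edgeFinset.card : ℝ)) else 0 := by
          intro i
          rw [hπ, hP]
          split
          · have hd : (G.degree i : ℝ) ≠ 0 := ne_of_gt (hdegR i)
            rw [div_mul_div_comm, mul_one,
              mul_comm (2 * ((G.edgeFinset.card : ℝ))) ((G.degree i : ℝ)),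
              ← div_div, div_self hd]
          · ring
        simp only [hterm]
        rw [Finset.sum_ite, Finset.sum_const_zero, add_zero, Finset.sum_const,
          nsmul_eq_mul]
        have hc : (Finset.univ.filter (fun i => G.Adj i k)).card = G.degree k := by
          have : (Finset.univ.filter (fun i => G.Adj i k))
              = (Finset.univ.filter (fun i => G.Adj k i)) := by
            apply Finset.filter_congr
            intro i _
            simp [G.adj_comm]
          rw [this, ← SimpleGraph.card_neighborFinset_eq_degree,
            SimpleGraph.neighborFinset_eq_filter]
        rw [hc, hπ k]
        ring
      set S : V → ℝ := fun j => ∑ i, π i * ET i j with hSdef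
      -- Kac's formula
      have hkac : ∀ j, π j * (1 + ∑ k, P j k * ET k j) = 1 := by
        intro j
        have h1 : S j = ∑ i ∈ Finset.univ.erase j, π i * ET i j := by
          show (∑ i, π i * ET i j) = _
          rw [← Finset.add_sum_erase Finset.univ (fun i => π i * ET i j) (Finset.mem_univ j)]
          simp [hET_diag]
        have h2 : ∑ i ∈ Finset.univ.erase j, π i * ET i j
            = ∑ i ∈ Finset.univ.erase j, π i * (1 + ∑ k, P i k * ET k j) := by
          apply Finset.sum_congr rfl
          intro i hi
          rw [hET_step i j (Finset.ne_of_mem_erase hi)]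
        have h3 : ∑ i ∈ Finset.univ.erase j, π i * (1 + ∑ k, P i k * ET k j)
            = (∑ i ∈ Finset.univ.erase j, π i)
              + ((∑ i, π i * ∑ k, P i k * ET k j) - π j * ∑ k, P j k * ET k j) := by
          rw [show (∑ i ∈ Finset.univ.erase j, π i * (1 + ∑ k, P i k * ET k j))
              = (∑ i ∈ Finset.univ.erase j, (π i + π i * ∑ k, P i k * ET k j)) from
            Finset.sum_congr rfl (fun i _ => by ring)]
          rw [Finset.sum_add_distrib]
          congr 1
          rw [eq_sub_iff_add_eq, Finset.sum_erase_add Finset.univ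
            (fun i => π i * ∑ k, P i k * ET k j) (Finset.mem_univ j)]
        have h4 : (∑ i, π i * ∑ k, P i k * ET k j) = S j := by
          calc ∑ i, π i * ∑ k, P i k * ET k j
              = ∑ i, ∑ k, π i * P i k * ET k j := by
                apply Finset.sum_congr rfl; intro i _
                rw [Finset.mul_sum]; apply Finset.sum_congr rfl; intro k _; ring
            _ = ∑ k, ∑ i, π i * P i k * ET k j := Finset.sum_comm
            _ = ∑ k, π k * ET k j := by
                apply Finset.sum_congr rfl; intro k _
                rw [← Finset.sum_mul, hstat k]
        have h5 : ∑ i ∈ Finset.univ.erase j, π i = 1 - π j := by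
          rw [eq_sub_iff_add_eq, Finset.sum_erase_add Finset.univ π
            (Finset.mem_univ j), hπsum]
        have := h1.trans (h2.trans h3)
        rw [h4, h5] at this
        have : π j * ∑ k, P j k * ET k j = 1 - π j := by linarith
        rw [mul_add, mul_one, this]; ring
      -- S is harmonic
      have hSsym : ∀ j, S j = ∑ i, π i * ET j i := by
        intro j
        show (∑ i, π i * ET i j) = _
        apply Finset.sum_congr rfl; intro i _; rw [hET_sym]
      have hharm : ∀ j, ∑ k, P j k * S k = S j := by
        intro j
        have hc : ∀ k, P j k * S k = ∑ i, π i * (P j k * ET k i) := by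
          intro k
          rw [hSsym k, Finset.mul_sum]
          apply Finset.sum_congr rfl; intro i _; ring
        calc ∑ k, P j k * S k = ∑ k, ∑ i, π i * (P j k * ET k i) := by
              exact Finset.sum_congr rfl (fun k _ => hc k)
          _ = ∑ i, ∑ k, π i * (P j k * ET k i) := Finset.sum_comm
          _ = ∑ i, π i * ∑ k, P j k * ET k i := by
              apply Finset.sum_congr rfl; intro i _; rw [Finset.mul_sum]
          _ = S j := by
              have hsplit : ∀ i, i ≠ j → π i * ∑ k, P j k * ET k i
                  = π i * ET j i - π i := by
                intro i hij
                rw [hET_step j i (Ne.symm hij)]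
                ring
              have hjterm : π j * ∑ k, P j k * ET k j = 1 - π j := by
                have := hkac j
                rw [mul_add, mul_one] at this
                linarith
              rw [← Finset.add_sum_erase Finset.univ
                (fun i => π i * ∑ k, P j k * ET k i) (Finset.mem_univ j), hjterm]
              rw [Finset.sum_congr rfl
                (fun i hi => hsplit i (Finset.ne_of_mem_erase hi))]
              rw [Finset.sum_sub_distrib]
              have h5 : ∑ i ∈ Finset.univ.erase j, π i = 1 - π j := by
                rw [eq_sub_iff_add_eq, Finset.sum_erase_add Finset.univ π
                  (Finset.mem_univ j), hπsum]
              have h6 : ∑ i ∈ Finset.univ.erase j, π i * ET j i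
                  = S j := by
                rw [hSsym j, ← Finset.add_sum_erase Finset.univ
                  (fun i => π i * ET j i) (Finset.mem_univ j)]
                simp [hET_diag]
              rw [h5, h6]
              ring
      -- maximum principle: S is constant
      obtain ⟨j0, _, hj0⟩ := Finset.exists_max_image Finset.univ S univ_nonempty
      have hadjstep : ∀ u v, G.Adj u v → S u = S j0 → S v = S j0 := by
        intro u v huv hu
        have hsum0 : ∑ k, P u k * (S j0 - S k) = 0 := by
          rw [Finset.sum_congr rfl (fun k _ => by ring :
            ∀ k ∈ Finset.univ, P u k * (S j0 - S k) = P u k * S j0 - P u k * S k)]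
          rw [Finset.sum_sub_distrib, ← Finset.sum_mul, hProw u, one_mul, hharm u, hu,
            sub_self]
        have hterm0 : ∀ k ∈ Finset.univ, P u k * (S j0 - S k) = 0 := by
          rw [← Finset.sum_eq_zero_iff_of_nonneg]
          · exact hsum0
          · intro k _
            have := hj0 k (Finset.mem_univ k)
            have hnn := hPnn u k
            nlinarith
        have hv := hterm0 v (Finset.mem_univ v)
        have hPuv : 0 < P u v := by
          rw [hP, if_pos huv]
          exact div_pos one_pos (hdegR u)
        have := mul_eq_zero.mp hv
        rcases this with h | h
        · exact absurd h (ne_of_gt hPuv)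
        · linarith
      have hconst : ∀ j, S j = S j0 := by
        have hwalk : ∀ (a b : V) (p : G.Walk a b), S a = S j0 → S b = S j0 := by
          intro a b p
          induction p with
          | nil => exact id
          | cons h p ih => exact fun ha => ih (hadjstep _ _ h ha)
        intro j
        exact hwalk j0 j (hG.preconnected j0 j).some rfl
      -- tav = S j0
      have htav' : tav = S j0 := by
        rw [htav]
        calc ∑ i, ∑ j, π i * π j * ET i j
            = ∑ j, ∑ i, π i * π j * ET i j := Finset.sum_comm
          _ = ∑ j, π j * S j := by
              apply Finset.sum_congr rfl; intro j _
              rw [hSdef, Finset.mul_sum]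
              apply Finset.sum_congr rfl; intro i _; ring
          _ = ∑ j, π j * S j0 := by
              exact Finset.sum_congr rfl (fun j _ => by rw [hconst j])
          _ = S j0 := by rw [← Finset.sum_mul, hπsum, one_mul]
      intro j
      rw [htav', ← hconst j]
    · -- subsingleton case
      have hsub : Subsingleton V := not_nontrivial_iff_subsingleton.mp hnt
      have hET0 : ∀ i j : V, ET i j = 0 := by
        intro i j; rw [Subsingleton.elim i j, hET_diag]
      intro j
      simp [hET0, htav]
  -- main identities
  have hfun : ∀ j, (∑ i, (μ i - π i) * ET i j) = (∑ i, μ i * ET i j) - tav := by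
    intro j
    rw [← key j, ← Finset.sum_sub_distrib]
    apply Finset.sum_congr rfl; intro i _; ring
  have hfun' : (fun j => ∑ i, (μ i - π i) * ET i j)
      = fun j => (∑ i, μ i * ET i j) - tav := funext hfun
  have hsup : univ.sup' univ_nonempty (fun j => ∑ i, (μ i - π i) * ET i j)
      = univ.sup' univ_nonempty (fun j => ∑ i, μ i * ET i j) - tav := by
    rw [hfun']
    exact (Finset.comp_sup'_eq_sup'_comp univ_nonempty (fun x : ℝ => x - tav)
      (fun x y => (max_sub_sub_right x y tav).symm)).symm
  refine ⟨hsup, ?_⟩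
  rw [hsup]
  apply sub_le_sub_right
  apply Finset.sup'_le
  intro j _
  calc ∑ i, μ i * ET i j
      ≤ ∑ i, μ i * (univ.sup' univ_nonempty (fun q : V × V => ET q.1 q.2)) := by
        apply Finset.sum_le_sum
        intro i _
        exact mul_le_mul_of_nonneg_left
          (Finset.le_sup' (fun q : V × V => ET q.1 q.2) (Finset.mem_univ (i, j))) (hμ0 i)
    _ = univ.sup' univ_nonempty (fun q : V × V => ET q.1 q.2) := by
        rw [← Finset.sum_mul, hμ1, one_mul]
end

section
/- For the simple random walk on the n-path {0,1,…,n} with reflecting boundaries, the access time equals H(μ,ν) = E_{Z∼ν}[Z²] − E_{Z∼μ}[Z²] + 2n · max_{j ∈ {0,…,n}} ( E_{Z∼μ}[(Z−j)₊] − E_{Z∼ν}[(Z−j)₊] ), where x₊ := max{x,0}. -/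
open Finset

/-- For the simple random walk on the n-path `{0,…,n}` with reflecting
boundaries, the access time `H(μ,ν) = max_j Σ_i (μ_i − ν_i) E_i[τ_j]` equals
`E_ν[Z²] − E_μ[Z²] + 2n · max_j (E_μ[(Z−j)₊] − E_ν[(Z−j)₊])`. -/
theorem npath_access_time_formula
    (n : ℕ) (hn : 0 < n)
    (P : Fin (n + 1) → Fin (n + 1) → ℝ)
    (hP : ∀ i j : Fin (n + 1), P i j =
      if (i : ℕ) = 0 then (if (j : ℕ) = 1 then 1 else 0)
      else if (i : ℕ) = n then (if (j : ℕ) + 1 = n then 1 else 0)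
      else if (j : ℕ) = (i : ℕ) + 1 ∨ (j : ℕ) + 1 = (i : ℕ) then 1 / 2 else 0)
    (ET : Fin (n + 1) → Fin (n + 1) → ℝ)
    (hET_diag : ∀ j, ET j j = 0)
    (hET_step : ∀ i j, i ≠ j → ET i j = 1 + ∑ k, P i k * ET k j)
    (μ ν : Fin (n + 1) → ℝ)
    (hμ0 : ∀ i, 0 ≤ μ i) (hμ1 : ∑ i, μ i = 1)
    (hν0 : ∀ i, 0 ≤ ν i) (hν1 : ∑ i, ν i = 1) :
    univ.sup' univ_nonempty (fun j => ∑ i, (μ i - ν i) * ET i j)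
      = (∑ i, ν i * (i : ℝ) ^ 2) - (∑ i, μ i * (i : ℝ) ^ 2)
        + 2 * n * univ.sup' univ_nonempty (fun j : Fin (n + 1) =>
            (∑ i, μ i * max ((i : ℝ) - (j : ℝ)) 0)
            - (∑ i, ν i * max ((i : ℝ) - (j : ℝ)) 0)) := by
  -- recurrence at the left endpoint
  have h0 : ∀ j : Fin (n+1), (j : ℕ) ≠ 0 →
      ET ⟨0, by omega⟩ j = 1 + ET ⟨1, by omega⟩ j := by
    intro j hj
    have hne : (⟨0, by omega⟩ : Fin (n+1)) ≠ j := by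
      intro h; apply hj; rw [← h]
    rw [hET_step _ _ hne]
    have : ∑ k, P ⟨0, by omega⟩ k * ET k j = ET ⟨1, by omega⟩ j := by
      rw [Finset.sum_eq_single (⟨1, by omega⟩ : Fin (n+1))]
      · rw [hP]; simp
      · intro k _ hk
        rw [hP]
        have : (k : ℕ) ≠ 1 := by
          intro h; apply hk; exact Fin.ext h
        simp [this]
      · simp
    rw [this]
  -- recurrence at the right endpoint
  have htop : ∀ j : Fin (n+1), (j : ℕ) ≠ n →
      ET ⟨n, by omega⟩ j = 1 + ET ⟨n-1, by omega⟩ j := by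
    intro j hj
    have hne : (⟨n, by omega⟩ : Fin (n+1)) ≠ j := by
      intro h; apply hj; rw [← h]
    rw [hET_step _ _ hne]
    have : ∑ k, P ⟨n, by omega⟩ k * ET k j = ET ⟨n-1, by omega⟩ j := by
      rw [Finset.sum_eq_single (⟨n-1, by omega⟩ : Fin (n+1))]
      · rw [hP]
        have h1 : ¬ ((n:ℕ) = 0) := by omega
        have h2 : (n - 1) + 1 = n := by omega
        simp [h1, h2]
      · intro k _ hk
        rw [hP]
        have hk' : (k : ℕ) ≠ n - 1 := by
          intro h; apply hk; exact Fin.ext h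
        have : ¬ ((k:ℕ) + 1 = n) := by omega
        have h1 : ¬ ((n:ℕ) = 0) := by omega
        simp [h1, this]
      · simp
    rw [this]
  -- recurrence in the interior
  have hmid : ∀ (j : Fin (n+1)) (i : ℕ) (hi0 : 0 < i) (hin : i < n), i ≠ (j : ℕ) →
      ET ⟨i, by omega⟩ j = 1 + (1/2) * ET ⟨i-1, by omega⟩ j
        + (1/2) * ET ⟨i+1, by omega⟩ j := by
    intro j i hi0 hin hij
    have hne : (⟨i, by omega⟩ : Fin (n+1)) ≠ j := by
      intro h; apply hij; rw [← h]
    rw [hET_step _ _ hne]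
    have key : ∑ k, P ⟨i, by omega⟩ k * ET k j
        = (1/2) * ET ⟨i-1, by omega⟩ j + (1/2) * ET ⟨i+1, by omega⟩ j := by
      have split : ∀ k : Fin (n+1), P ⟨i, by omega⟩ k * ET k j
          = (if k = (⟨i+1, by omega⟩ : Fin (n+1)) then (1/2) * ET k j else 0)
            + (if k = (⟨i-1, by omega⟩ : Fin (n+1)) then (1/2) * ET k j else 0) := by
        intro k
        rw [hP]
        have h1 : ¬ (((⟨i, by omega⟩ : Fin (n+1)) : ℕ) = 0) := by simp; omega
        have h2 : ¬ (((⟨i, by omega⟩ : Fin (n+1)) : ℕ) = n) := by simp; omega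
        rw [if_neg h1, if_neg h2]
        by_cases ha : (k : ℕ) = i + 1
        · have hka : k = (⟨i+1, by omega⟩ : Fin (n+1)) := Fin.ext ha
          have hkb : k ≠ (⟨i-1, by omega⟩ : Fin (n+1)) := by
            intro h; rw [h] at ha; simp only [Fin.val_mk] at ha; omega
          rw [if_pos (by left; simpa using ha), if_pos hka, if_neg hkb]; ring
        · by_cases hb : (k : ℕ) + 1 = i
          · have hkv : (k : ℕ) = i - 1 := by omega
            have hkb : k = (⟨i-1, by omega⟩ : Fin (n+1)) := Fin.ext hkv
            have hka : k ≠ (⟨i+1, by omega⟩ : Fin (n+1)) := by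
              intro h; rw [h] at hb; simp only [Fin.val_mk] at hb; omega
            rw [if_pos (by right; simpa using hb), if_neg hka, if_pos hkb]; ring
          · have hka : k ≠ (⟨i+1, by omega⟩ : Fin (n+1)) := by
              intro h; apply ha; rw [h]
            have hkb : k ≠ (⟨i-1, by omega⟩ : Fin (n+1)) := by
              intro h; apply hb; rw [h]; simp; omega
            have hor : ¬ ((k:ℕ) = ((⟨i, by omega⟩ : Fin (n+1)):ℕ) + 1 ∨ (k:ℕ) + 1 = ((⟨i, by omega⟩ : Fin (n+1)):ℕ)) := by
              simp only [Fin.val_mk]; push_neg; exact ⟨ha, hb⟩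
            rw [if_neg hor, if_neg hka, if_neg hkb]; ring
      rw [Finset.sum_congr rfl (fun k _ => split k), Finset.sum_add_distrib,
        Finset.sum_ite_eq', Finset.sum_ite_eq']
      simp only [Finset.mem_univ, if_true]
      ring
    rw [key]; ring
  -- difference relation left of j
  have diffL : ∀ (j : ℕ) (hj : j ≤ n) (i : ℕ) (hij : i < j),
      ET ⟨i, by omega⟩ ⟨j, by omega⟩
        = ET ⟨i+1, by omega⟩ ⟨j, by omega⟩ + (2*(i:ℝ)+1) := by
    intro j hj i
    induction i with
    | zero =>
      intro hij
      have := h0 ⟨j, by omega⟩ (by simp; omega)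
      push_cast
      linarith
    | succ m ih =>
      intro hij
      have hs := hmid ⟨j, by omega⟩ (m+1) (by omega) (by omega) (by simp; omega)
      simp only [Nat.add_sub_cancel] at hs
      have hm := ih (by omega)
      push_cast
      push_cast at hm
      linarith
  -- values left of j
  have valL : ∀ (j : ℕ) (hj : j ≤ n) (m i : ℕ) (h1 : i ≤ j) (h2 : j ≤ i + m),
      ET ⟨i, by omega⟩ ⟨j, by omega⟩ = (j:ℝ)^2 - (i:ℝ)^2 := by
    intro j hj m
    induction m with
    | zero =>
      intro i h1 h2
      have hij : i = j := by omega
      subst hij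
      rw [hET_diag]; ring
    | succ m ih =>
      intro i h1 h2
      rcases eq_or_lt_of_le h1 with heq | hlt
      · subst heq; rw [hET_diag]; ring
      · have hd := diffL j hj i hlt
        have hI := ih (i+1) (by omega) (by omega)
        rw [hd, hI]
        push_cast
        ring
  -- difference relation right of j
  have diffR : ∀ (j : ℕ) (hj : j ≤ n) (m i : ℕ) (h1 : j < i) (h2 : i ≤ n) (h3 : n ≤ i + m),
      ET ⟨i, by omega⟩ ⟨j, by omega⟩
        = ET ⟨i-1, by omega⟩ ⟨j, by omega⟩ + (2*((n:ℝ)-(i:ℝ))+1) := by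
    intro j hj m
    induction m with
    | zero =>
      intro i h1 h2 h3
      have hin : i = n := by omega
      subst hin
      have := htop ⟨j, by omega⟩ (by simp; omega)
      push_cast
      linarith
    | succ m ih =>
      intro i h1 h2 h3
      rcases eq_or_lt_of_le h2 with heq | hlt
      · subst heq
        have := htop ⟨j, by omega⟩ (by simp; omega)
        push_cast
        linarith
      · have hs := hmid ⟨j, by omega⟩ i (by omega) hlt (by simp; omega)
        have hI := ih (i+1) (by omega) (by omega) (by omega)
        simp only [Nat.add_sub_cancel] at hI
        push_cast at hI ⊢
        linarith
  -- values right of j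
  have valR : ∀ (j : ℕ) (hj : j ≤ n) (m i : ℕ) (h1 : j ≤ i) (h2 : i ≤ n) (h3 : i ≤ j + m),
      ET ⟨i, by omega⟩ ⟨j, by omega⟩
        = (j:ℝ)^2 - (i:ℝ)^2 + 2*(n:ℝ)*((i:ℝ)-(j:ℝ)) := by
    intro j hj m
    induction m with
    | zero =>
      intro i h1 h2 h3
      have hij : i = j := by omega
      subst hij
      rw [hET_diag]; ring
    | succ m ih =>
      intro i h1 h2 h3
      rcases eq_or_lt_of_le h1 with heq | hlt
      · subst heq; rw [hET_diag]; ring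
      · have hd := diffR j hj n i hlt h2 (by omega)
        have hI := ih (i-1) (by omega) (by omega) (by omega)
        have hc : ((i-1 : ℕ) : ℝ) = (i:ℝ) - 1 := by
          rw [Nat.cast_sub (by omega)]; norm_num
        rw [hc] at hI
        have hii : (⟨i-1+1, by omega⟩ : Fin (n+1)) = (⟨i, by omega⟩ : Fin (n+1)) := by
          apply Fin.ext; simp; omega
        rw [hd, hI]
        ring
    
  -- closed form for hitting times
  have hclosed : ∀ i j : Fin (n+1),
      ET i j = (j:ℝ)^2 - (i:ℝ)^2 + 2*(n:ℝ)*(max ((i:ℝ) - (j:ℝ)) 0) := by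
    rintro ⟨i, hi⟩ ⟨j, hj⟩
    rcases le_or_gt i j with h | h
    · have hv := valL j (by omega) j i h (by omega)
      have hm : max ((i:ℝ) - (j:ℝ)) 0 = 0 := by
        apply max_eq_right
        have : (i:ℝ) ≤ (j:ℝ) := by exact_mod_cast h
        linarith
      rw [hv, hm]; ring
    · have hv := valR j (by omega) n i (le_of_lt h) (by omega) (by omega)
      have hm : max ((i:ℝ) - (j:ℝ)) 0 = (i:ℝ) - (j:ℝ) := by
        apply max_eq_left
        have : (j:ℝ) ≤ (i:ℝ) := by exact_mod_cast (le_of_lt h)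
        linarith
      rw [hv, hm]
  -- the sum for fixed target j
  have hsum : ∀ j : Fin (n+1), (∑ i, (μ i - ν i) * ET i j)
      = ((∑ i, ν i * (i:ℝ)^2) - (∑ i, μ i * (i:ℝ)^2))
        + 2*(n:ℝ)*((∑ i, μ i * max ((i:ℝ) - (j:ℝ)) 0)
            - (∑ i, ν i * max ((i:ℝ) - (j:ℝ)) 0)) := by
    intro j
    have expand : ∀ i : Fin (n+1), (μ i - ν i) * ET i j
        = (j:ℝ)^2 * (μ i - ν i) + (ν i * (i:ℝ)^2 - μ i * (i:ℝ)^2)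
          + 2*(n:ℝ)*(μ i * max ((i:ℝ)-(j:ℝ)) 0 - ν i * max ((i:ℝ)-(j:ℝ)) 0) := by
      intro i; rw [hclosed i j]; ring
    rw [Finset.sum_congr rfl (fun i _ => expand i)]
    rw [Finset.sum_add_distrib, Finset.sum_add_distrib, ← Finset.mul_sum,
      Finset.sum_sub_distrib, Finset.sum_sub_distrib, hμ1, hν1,
      ← Finset.mul_sum, Finset.sum_sub_distrib]
    ring
  -- factor out constants through the sup
  have hfun : (fun j : Fin (n+1) => ∑ i, (μ i - ν i) * ET i j)
      = fun j : Fin (n+1) => ((∑ i, ν i * (i:ℝ)^2) - (∑ i, μ i * (i:ℝ)^2))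
        + 2*(n:ℝ)*((∑ i, μ i * max ((i:ℝ) - (j:ℝ)) 0)
            - (∑ i, ν i * max ((i:ℝ) - (j:ℝ)) 0)) := funext hsum
  rw [hfun]
  set C : ℝ := (∑ i, ν i * (i:ℝ)^2) - (∑ i, μ i * (i:ℝ)^2) with hC
  set F : Fin (n+1) → ℝ := fun j => (∑ i, μ i * max ((i:ℝ) - (j:ℝ)) 0)
      - (∑ i, ν i * max ((i:ℝ) - (j:ℝ)) 0) with hF
  apply le_antisymm
  · apply Finset.sup'_le
    intro j _
    have h1 : F j ≤ univ.sup' univ_nonempty F := Finset.le_sup' F (Finset.mem_univ j)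
    have h2 : (0:ℝ) ≤ 2*(n:ℝ) := by positivity
    have := mul_le_mul_of_nonneg_left h1 h2
    show C + 2 * (n:ℝ) * F j ≤ C + 2 * (n:ℝ) * univ.sup' univ_nonempty F
    linarith
  · obtain ⟨j0, -, hj0⟩ := Finset.exists_mem_eq_sup' univ_nonempty F
    rw [hj0]
    exact Finset.le_sup' (fun j : Fin (n+1) => C + 2 * (n:ℝ) *
      ((∑ i, μ i * max ((i:ℝ) - (j:ℝ)) 0) - (∑ i, ν i * max ((i:ℝ) - (j:ℝ)) 0)))
      (Finset.mem_univ j0)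
end

section
/- For the simple random walk on the n-path {0,1,…,n} with reflecting boundaries, the access time satisfies max{ E_{Z∼ν}[Z²] − E_{Z∼μ}[Z²] + 2n( E_{Z∼μ}[Z] − E_{Z∼ν}[Z] ), 0 } ≤ H(μ,ν) ≤ n². -/
open Finset


lemma sum_ind {N : ℕ} (c : Fin N) (x : Fin N → ℝ) (v : ℝ) :
    ∑ k, (if k = c then v else 0) * x k = v * x c := by
  rw [Finset.sum_eq_single c] <;> simp +contextual

section
variable (n : ℕ) (hn : 0 < n)
    (P : Fin (n + 1) → Fin (n + 1) → ℝ)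
    (hP : ∀ i j : Fin (n + 1), P i j =
      if (i : ℕ) = 0 then (if (j : ℕ) = 1 then 1 else 0)
      else if (i : ℕ) = n then (if (j : ℕ) + 1 = n then 1 else 0)
      else if (j : ℕ) = (i : ℕ) + 1 ∨ (j : ℕ) + 1 = (i : ℕ) then 1 / 2 else 0)
    (ET : Fin (n + 1) → Fin (n + 1) → ℝ)
    (hET_diag : ∀ j, ET j j = 0)
    (hET_step : ∀ i j, i ≠ j → ET i j = 1 + ∑ k, P i k * ET k j)

def e (m : ℕ) : Fin (n+1) := ⟨min m n, by omega⟩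

lemma e_coe (m : ℕ) (h : m ≤ n) : ((e n m : Fin (n+1)) : ℕ) = m := by
  simp [e, Nat.min_eq_left h]

lemma coe_eq_iff (k : Fin (n+1)) (m : ℕ) (hm : m ≤ n) : (k:ℕ) = m ↔ k = e n m := by
  rw [Fin.ext_iff, e_coe n m hm]

include hn hP hET_step in
lemma step0 (j : Fin (n+1)) (hj : (j:ℕ) ≠ 0) :
    ET (e n 0) j = 1 + ET (e n 1) j := by
  have h0 : ((e n 0 : Fin (n+1)) : ℕ) = 0 := e_coe n 0 (by omega)
  rw [hET_step _ _ (by intro h; exact hj (by rw [← h, h0]))]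
  congr 1
  have key : ∀ k : Fin (n+1), P (e n 0) k * ET k j
      = (if k = e n 1 then (1:ℝ) else 0) * ET k j := by
    intro k
    rw [hP]
    simp only [h0, eq_self_iff_true, if_true, coe_eq_iff n k 1 hn]
  rw [Finset.sum_congr rfl (fun k _ => key k), sum_ind, one_mul]

include hn hP hET_step in
lemma stepn (j : Fin (n+1)) (hj : (j:ℕ) ≠ n) :
    ET (e n n) j = 1 + ET (e n (n-1)) j := by
  have h0 : ((e n n : Fin (n+1)) : ℕ) = n := e_coe n n le_rfl
  rw [hET_step _ _ (by intro h; exact hj (by rw [← h, h0]))]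
  congr 1
  have key : ∀ k : Fin (n+1), P (e n n) k * ET k j
      = (if k = e n (n-1) then (1:ℝ) else 0) * ET k j := by
    intro k
    rw [hP]
    have hiff : ((k:ℕ) + 1 = n) ↔ (k = e n (n-1)) := by
      rw [← coe_eq_iff n k (n-1) (by omega)]; omega
    simp only [h0, if_neg (by omega : ¬ (n = 0)), eq_self_iff_true, if_true, hiff]
  rw [Finset.sum_congr rfl (fun k _ => key k), sum_ind, one_mul]

include hn hP hET_step in
lemma stepi (j : Fin (n+1)) (m : ℕ) (h0 : 0 < m) (h1 : m < n) (hj : (j:ℕ) ≠ m) :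
    ET (e n m) j = 1 + (ET (e n (m-1)) j + ET (e n (m+1)) j) / 2 := by
  have hc : ((e n m : Fin (n+1)) : ℕ) = m := e_coe n m (by omega)
  rw [hET_step _ _ (by intro h; exact hj (by rw [← h, hc]))]
  have key : ∀ k : Fin (n+1), P (e n m) k * ET k j
      = ((if k = e n (m+1) then (1/2:ℝ) else 0) + (if k = e n (m-1) then (1/2:ℝ) else 0)) * ET k j := by
    intro k
    rw [hP]
    simp only [hc, if_neg (by omega : ¬ (m = 0)), if_neg (by omega : ¬ (m = n))]
    have e1 : ((k:ℕ) = m + 1) ↔ (k = e n (m+1)) := coe_eq_iff n k (m+1) (by omega)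
    have e2 : ((k:ℕ) + 1 = m) ↔ (k = e n (m-1)) := by
      rw [← coe_eq_iff n k (m-1) (by omega)]; omega
    have hsplit : (if (k:ℕ) = m+1 ∨ (k:ℕ)+1 = m then (1/2:ℝ) else 0)
        = (if k = e n (m+1) then (1/2:ℝ) else 0) + (if k = e n (m-1) then (1/2:ℝ) else 0) := by
      by_cases a : (k:ℕ) = m+1
      · rw [if_pos (Or.inl a), if_pos (e1.mp a), if_neg, add_zero]
        intro h; have := e2.mpr h; omega
      · by_cases b : (k:ℕ)+1 = m
        · rw [if_pos (Or.inr b), if_neg (fun h => a (e1.mpr h)), if_pos (e2.mp b), zero_add]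
        · rw [if_neg (by tauto), if_neg (fun h => a (e1.mpr h)), if_neg (fun h => b (e2.mpr h)), add_zero]
    rw [hsplit]
  rw [Finset.sum_congr rfl (fun k _ => key k)]
  simp only [add_mul, Finset.sum_add_distrib, sum_ind]
  ring
end


section
variable (n : ℕ) (hn : 0 < n)
    (P : Fin (n + 1) → Fin (n + 1) → ℝ)
    (hP : ∀ i j : Fin (n + 1), P i j =
      if (i : ℕ) = 0 then (if (j : ℕ) = 1 then 1 else 0)
      else if (i : ℕ) = n then (if (j : ℕ) + 1 = n then 1 else 0)
      else if (j : ℕ) = (i : ℕ) + 1 ∨ (j : ℕ) + 1 = (i : ℕ) then 1 / 2 else 0)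
    (ET : Fin (n + 1) → Fin (n + 1) → ℝ)
    (hET_diag : ∀ j, ET j j = 0)
    (hET_step : ∀ i j, i ≠ j → ET i j = 1 + ∑ k, P i k * ET k j)

include hn hP hET_step in
lemma diff_lower (j : Fin (n+1)) : ∀ i : ℕ, i < (j:ℕ) →
    ET (e n i) j - ET (e n (i+1)) j = 1 + 2*(i:ℝ) := by
  have hjn : (j:ℕ) < n + 1 := j.isLt
  intro i
  induction i with
  | zero =>
    intro h
    have := step0 n hn P hP ET hET_step j (by omega)
    push_cast
    linarith
  | succ i ih =>
    intro h
    have hint := stepi n hn P hP ET hET_step j (i+1) (by omega) (by omega) (by omega)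
    have ihv := ih (by omega)
    simp only [Nat.add_sub_cancel] at hint
    push_cast
    push_cast at ihv
    linarith

include hn hP hET_diag hET_step in
lemma val_lower (j : Fin (n+1)) : ∀ d i : ℕ, i + d = (j:ℕ) →
    ET (e n i) j = (j:ℝ)^2 - (i:ℝ)^2 := by
  have hjn : (j:ℕ) < n + 1 := j.isLt
  intro d
  induction d with
  | zero =>
    intro i h
    have hie : e n i = j := by
      apply Fin.ext; rw [e_coe n i (by omega)]; omega
    have hc : (i:ℝ) = ((j:ℕ):ℝ) := by exact_mod_cast (by omega : i = (j:ℕ))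
    rw [hie, hET_diag, hc]; ring
  | succ d ih =>
    intro i h
    have hd := diff_lower n hn P hP ET hET_step j i (by omega)
    have ihv := ih (i+1) (by omega)
    push_cast at ihv ⊢
    linear_combination hd + ihv
  
include hn hP hET_step in
lemma diff_upper (j : Fin (n+1)) : ∀ d i : ℕ, i + d + 1 = n → (j:ℕ) ≤ i →
    ET (e n (i+1)) j - ET (e n i) j = 2*(n:ℝ) - 1 - 2*(i:ℝ) := by
  intro d
  induction d with
  | zero =>
    intro i h hj
    have hsn := stepn n hn P hP ET hET_step j (by omega)
    rw [show n - 1 = i from by omega] at hsn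
    rw [show i + 1 = n from by omega]
    have hc : (i:ℝ) = (n:ℝ) - 1 := by
      have := congrArg (Nat.cast : ℕ → ℝ) (show i + 1 = n from by omega)
      push_cast at this
      linarith
    rw [hc]
    linarith
  | succ d ih =>
    intro i h hj
    have ihv := ih (i+1) (by omega) (by omega)
    have hint := stepi n hn P hP ET hET_step j (i+1) (by omega) (by omega) (by omega)
    simp only [Nat.add_sub_cancel] at hint
    push_cast at ihv ⊢
    linarith

include hn hP hET_diag hET_step in
lemma val_upper (j : Fin (n+1)) : ∀ d i : ℕ, (j:ℕ) + d = i → i ≤ n →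
    ET (e n i) j = (j:ℝ)^2 - (i:ℝ)^2 + 2*(n:ℝ)*((i:ℝ) - (j:ℝ)) := by
  intro d
  induction d with
  | zero =>
    intro i h hi
    have hie : e n i = j := by
      apply Fin.ext; rw [e_coe n i (by omega)]; omega
    have hc : (i:ℝ) = ((j:ℕ):ℝ) := by exact_mod_cast (by omega : i = (j:ℕ))
    rw [hie, hET_diag, hc]; ring
  | succ d ih =>
    intro i h hi
    have ihv := ih ((j:ℕ) + d) rfl (by omega)
    have hd := diff_upper n hn P hP ET hET_step j (n - i) ((j:ℕ) + d) (by omega) (by omega)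
    rw [show (j:ℕ) + d + 1 = i from by omega] at hd
    have hc : (i:ℝ) = ((j:ℕ):ℝ) + (d:ℝ) + 1 := by
      exact_mod_cast (by omega : i = (j:ℕ) + d + 1)
    push_cast at ihv hd ⊢
    linear_combination ihv + hd + ((i:ℝ) + ((j:ℕ):ℝ) + (d:ℝ) + 1 - 2*(n:ℝ)) * hc

include hn hP hET_diag hET_step in
lemma ET_formula (i j : Fin (n+1)) :
    ET i j = (j:ℝ)^2 - (i:ℝ)^2 + 2*(n:ℝ)*(max ((i:ℝ) - (j:ℝ)) 0) := by
  have hie : e n (i:ℕ) = i := by apply Fin.ext; exact e_coe n i (by omega)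
  rcases le_or_gt (i:ℕ) (j:ℕ) with hle | hlt
  · have hmax : max ((i:ℝ) - (j:ℝ)) 0 = 0 := by
      apply max_eq_right
      have : ((i:ℕ):ℝ) ≤ ((j:ℕ):ℝ) := by exact_mod_cast hle
      linarith
    have hv := val_lower n hn P hP ET hET_diag hET_step j ((j:ℕ) - (i:ℕ)) i (by omega)
    rw [hie] at hv
    rw [hmax, hv]; ring
  · have hmax : max ((i:ℝ) - (j:ℝ)) 0 = (i:ℝ) - (j:ℝ) := by
      apply max_eq_left
      have : ((j:ℕ):ℝ) ≤ ((i:ℕ):ℝ) := by exact_mod_cast hlt.le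
      linarith
    have hv := val_upper n hn P hP ET hET_diag hET_step j ((i:ℕ) - (j:ℕ)) i (by omega) (by omega)
    rw [hie] at hv
    rw [hmax, hv]
end

noncomputable def w (n m : ℕ) : ℝ := if m = 0 ∨ m = n then 1 else 2

lemma Wsum (n : ℕ) (hn : 0 < n) : ∑ m ∈ range (n+1), w n m = 2 * n := by
  have key : ∀ m ∈ range (n+1), w n m
      = 2 - (if m = 0 then (1:ℝ) else 0) - (if m = n then (1:ℝ) else 0) := by
    intro m _
    unfold w
    by_cases h0 : m = 0
    · rw [if_pos (Or.inl h0), if_pos h0, if_neg (by omega)]; norm_num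
    · by_cases h1 : m = n
      · rw [if_pos (Or.inr h1), if_neg h0, if_pos h1]; norm_num
      · rw [if_neg (by tauto), if_neg h0, if_neg h1]; norm_num
  rw [Finset.sum_congr rfl key]
  simp only [Finset.sum_sub_distrib, Finset.sum_const, Finset.card_range,
    Finset.sum_ite_eq' (range (n+1)), Finset.mem_range]
  rw [if_pos (by omega), if_pos (by omega)]
  push_cast
  ring

lemma Dsum (n : ℕ) (hn : 0 < n) (i : ℕ) (hi : i < n) :
    ∑ m ∈ range (n+1), w n m * (if m ≤ i then (1:ℝ) else 0) = 2 * i + 1 := by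
  have key : ∀ m ∈ range (n+1), w n m * (if m ≤ i then (1:ℝ) else 0)
      = (if m ≤ i then (2:ℝ) else 0) - (if m = 0 then (1:ℝ) else 0) := by
    intro m _
    unfold w
    by_cases h0 : m = 0
    · rw [if_pos (Or.inl h0), if_pos (by omega), if_pos (by omega), if_pos h0]; norm_num
    · rw [if_neg h0]
      by_cases h2 : m ≤ i
      · rw [if_pos h2, if_pos h2, if_neg (by omega)]; norm_num
      · rw [if_neg h2, if_neg h2]; norm_num
  rw [Finset.sum_congr rfl key]
  rw [Finset.sum_sub_distrib]
  have h1 : ∑ m ∈ range (n+1), (if m ≤ i then (2:ℝ) else 0) = 2 * (i+1) := by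
    rw [← Finset.sum_subset (Finset.range_subset_range.2 (by omega : i + 1 ≤ n + 1))
      (fun x _ hx => by rw [if_neg (by simp at hx ⊢; omega)])]
    rw [Finset.sum_congr rfl (fun x hx => if_pos (by simp at hx; omega)),
      Finset.sum_const, Finset.card_range]
    push_cast; ring
  rw [h1, Finset.sum_ite_eq' (range (n+1)), if_pos (by simp)]
  push_cast; ring

lemma Lsum (n : ℕ) (hn : 0 < n) : ∀ i : ℕ, i ≤ n →
    ∑ m ∈ range (n+1), w n m * max ((i:ℝ) - m) 0 = (i:ℝ)^2 := by
  intro i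
  induction i with
  | zero =>
    intro _
    rw [Finset.sum_eq_zero]
    · norm_num
    intro m _
    have : max ((0:ℝ) - m) 0 = 0 :=
      max_eq_right (by linarith [Nat.cast_nonneg (α := ℝ) m])
    push_cast
    rw [this, mul_zero]
  | succ i ih =>
    intro h
    have ihv := ih (by omega)
    have key : ∀ m ∈ range (n+1), w n m * max (((i:ℕ)+1:ℝ) - m) 0
        = w n m * max ((i:ℝ) - m) 0 + w n m * (if m ≤ i then (1:ℝ) else 0) := by
      intro m _
      by_cases hm : m ≤ i
      · have c1 : max (((i:ℕ)+1:ℝ) - m) 0 = ((i:ℕ)+1:ℝ) - m := by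
          apply max_eq_left
          have : (m:ℝ) ≤ (i:ℝ) := by exact_mod_cast hm
          linarith
        have c2 : max ((i:ℝ) - m) 0 = (i:ℝ) - m := by
          apply max_eq_left
          have : (m:ℝ) ≤ (i:ℝ) := by exact_mod_cast hm
          linarith
        rw [c1, c2, if_pos hm]; ring
      · have hm' : (i:ℝ) + 1 ≤ (m:ℝ) := by exact_mod_cast (by omega : i + 1 ≤ m)
        have c1 : max (((i:ℕ)+1:ℝ) - m) 0 = 0 := max_eq_right (by linarith)
        have c2 : max ((i:ℝ) - m) 0 = 0 := max_eq_right (by linarith)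
        rw [c1, c2, if_neg hm]; ring
    push_cast
    push_cast at key
    rw [Finset.sum_congr rfl key, Finset.sum_add_distrib, ihv, Dsum n hn i (by omega)]
    ring

/-- For the simple random walk on the n-path `{0,…,n}` with reflecting
boundaries, the access time `H(μ,ν) = max_j Σ_i (μ_i − ν_i) E_i[τ_j]` satisfies
`max{E_ν[Z²] − E_μ[Z²] + 2n(E_μ[Z] − E_ν[Z]), 0} ≤ H(μ,ν) ≤ n²`. -/
theorem npath_access_time_bounds
    (n : ℕ) (hn : 0 < n)
    (P : Fin (n + 1) → Fin (n + 1) → ℝ)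
    (hP : ∀ i j : Fin (n + 1), P i j =
      if (i : ℕ) = 0 then (if (j : ℕ) = 1 then 1 else 0)
      else if (i : ℕ) = n then (if (j : ℕ) + 1 = n then 1 else 0)
      else if (j : ℕ) = (i : ℕ) + 1 ∨ (j : ℕ) + 1 = (i : ℕ) then 1 / 2 else 0)
    (ET : Fin (n + 1) → Fin (n + 1) → ℝ)
    (hET_diag : ∀ j, ET j j = 0)
    (hET_step : ∀ i j, i ≠ j → ET i j = 1 + ∑ k, P i k * ET k j)
    (μ ν : Fin (n + 1) → ℝ)
    (hμ0 : ∀ i, 0 ≤ μ i) (hμ1 : ∑ i, μ i = 1)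
    (hν0 : ∀ i, 0 ≤ ν i) (hν1 : ∑ i, ν i = 1) :
    max ((∑ i, ν i * (i : ℝ) ^ 2) - (∑ i, μ i * (i : ℝ) ^ 2)
        + 2 * n * ((∑ i, μ i * (i : ℝ)) - (∑ i, ν i * (i : ℝ)))) 0
      ≤ univ.sup' univ_nonempty (fun j => ∑ i, (μ i - ν i) * ET i j) ∧
    univ.sup' univ_nonempty (fun j => ∑ i, (μ i - ν i) * ET i j)
      ≤ (n : ℝ) ^ 2 := by
  have hform := ET_formula n hn P hP ET hET_diag hET_step
  have hxn : ∀ i : Fin (n+1), ((i:ℕ):ℝ) ≤ n := fun i => by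
    exact_mod_cast (by omega : (i:ℕ) ≤ n)
  have hx0 : ∀ i : Fin (n+1), (0:ℝ) ≤ ((i:ℕ):ℝ) := fun i => Nat.cast_nonneg _
  have hET0 : ∀ i j, 0 ≤ ET i j := by
    intro i j
    rw [hform i j]
    rcases le_total ((i:ℕ):ℝ) ((j:ℕ):ℝ) with h | h
    · rw [max_eq_right (by linarith)]
      nlinarith [hx0 i, hx0 j]
    · rw [max_eq_left (by linarith)]
      nlinarith [hxn i, hxn j]
  have hETub : ∀ i j, ET i j ≤ (n:ℝ)^2 := by
    intro i j
    rw [hform i j]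
    rcases le_total ((i:ℕ):ℝ) ((j:ℕ):ℝ) with h | h
    · rw [max_eq_right (by linarith)]
      nlinarith [hx0 i, hxn j]
    · rw [max_eq_left (by linarith)]
      nlinarith [hxn i, hxn j, hx0 i, hx0 j, sq_nonneg (((i:ℕ):ℝ) + ((j:ℕ):ℝ) - n)]
  set f : Fin (n+1) → ℝ := fun j => ∑ i, (μ i - ν i) * ET i j with hf
  have upper : univ.sup' univ_nonempty f ≤ (n:ℝ)^2 := by
    apply Finset.sup'_le
    intro j _
    have : f j ≤ ∑ i, μ i * (n:ℝ)^2 - 0 := by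
      rw [hf]
      simp only [sub_mul]
      rw [Finset.sum_sub_distrib]
      apply sub_le_sub
      · exact Finset.sum_le_sum fun i _ =>
          mul_le_mul_of_nonneg_left (hETub i j) (hμ0 i)
      · exact Finset.sum_nonneg fun i _ => mul_nonneg (hν0 i) (hET0 i j)
    rw [← Finset.sum_mul, hμ1] at this
    simpa using this
  constructor
  · apply max_le
    · -- the explicit expression equals f (e n 0)
      have hc0 : ((e n 0 : Fin (n+1)) : ℕ) = 0 := e_coe n 0 (by omega)
      have key : ∀ i : Fin (n+1), (μ i - ν i) * ET i (e n 0)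
          = (ν i * ((i:ℕ):ℝ)^2 - μ i * ((i:ℕ):ℝ)^2)
            + (2*(n:ℝ)) * (μ i * ((i:ℕ):ℝ) - ν i * ((i:ℕ):ℝ)) := by
        intro i
        rw [hform i (e n 0), hc0]
        rw [max_eq_left (by push_cast; linarith [hx0 i])]
        push_cast
        ring
      have hval : f (e n 0) = (∑ i, ν i * ((i:ℕ):ℝ)^2) - (∑ i, μ i * ((i:ℕ):ℝ)^2)
          + 2*(n:ℝ) * ((∑ i, μ i * ((i:ℕ):ℝ)) - (∑ i, ν i * ((i:ℕ):ℝ))) := by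
        simp only [hf]
        rw [Finset.sum_congr rfl (fun i _ => key i)]
        simp only [Finset.sum_add_distrib, Finset.sum_sub_distrib, ← Finset.mul_sum]
      rw [← hval]
      exact Finset.le_sup' f (mem_univ _)
    · -- 0 ≤ sup via stationary weights
      by_contra hneg
      push_neg at hneg
      have wpos : ∀ m : ℕ, 0 < w n m := by
        intro m; unfold w; split <;> norm_num
      set C : ℝ := ∑ m ∈ range (n+1), w n m * (m:ℝ)^2 with hC
      have K : ∀ i : Fin (n+1), ∑ j : Fin (n+1), w n (j:ℕ) * ET i j = C := by
        intro i
        have key : ∀ j : Fin (n+1), w n (j:ℕ) * ET i j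
            = (w n (j:ℕ) * ((j:ℕ):ℝ)^2 - ((i:ℕ):ℝ)^2 * w n (j:ℕ))
              + (2*(n:ℝ)) * (w n (j:ℕ) * max (((i:ℕ):ℝ) - ((j:ℕ):ℝ)) 0) := by
          intro j; rw [hform]; ring
        rw [Finset.sum_congr rfl (fun j _ => key j)]
        simp only [Finset.sum_add_distrib, Finset.sum_sub_distrib, ← Finset.mul_sum]
        rw [Fin.sum_univ_eq_sum_range (fun m => w n m * ((m:ℕ):ℝ)^2) (n+1)]
        rw [Fin.sum_univ_eq_sum_range (fun m => w n m) (n+1)]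
        rw [Fin.sum_univ_eq_sum_range (fun m => w n m * max (((i:ℕ):ℝ) - ((m:ℕ):ℝ)) 0) (n+1)]
        push_cast
        rw [Wsum n hn, Lsum n hn (i:ℕ) (by omega)]
        ring
      have swap : ∑ j : Fin (n+1), w n (j:ℕ) * f j = 0 := by
        have e1 : ∑ j : Fin (n+1), w n (j:ℕ) * f j
            = ∑ i : Fin (n+1), (μ i - ν i) * (∑ j : Fin (n+1), w n (j:ℕ) * ET i j) := by
          simp only [hf]
          simp only [Finset.mul_sum]
          rw [Finset.sum_comm]
          exact Finset.sum_congr rfl fun i _ => Finset.sum_congr rfl fun j _ => by ring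
        rw [e1, Finset.sum_congr rfl (fun i _ => by rw [K i]), ← Finset.sum_mul]
        rw [Finset.sum_sub_distrib, hμ1, hν1]
        ring
      have neg : ∑ j : Fin (n+1), w n (j:ℕ) * f j < 0 := by
        have : ∀ j ∈ (univ : Finset (Fin (n+1))), w n (j:ℕ) * f j < 0 := fun j _ =>
          mul_neg_of_pos_of_neg (wpos _)
            (lt_of_le_of_lt (Finset.le_sup' f (mem_univ j)) hneg)
        exact Finset.sum_neg this univ_nonempty
      linarith [swap, neg]
  · exact upper
end

section
/- For the simple random walk on the n-path {0,1,…,n} with reflecting boundaries, let μ be the discrete uniform distribution on {0,…,n} and let ν be the binomial distribution with parameters n and p, where p ∈ (0, 1 − 1/√3). Then H(μ,ν) ≥ n²(p² − 2p + 2/3) + n(p(1−p) − 1/6), and since p² − 2p + 2/3 > 0 for such p, H(μ,ν) is of order n² (it also satisfies H(μ,ν) ≤ n²). -/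
open Finset

lemma my_sum_id (n : ℕ) : ∑ k ∈ range (n+1), (k:ℝ) = n*(n+1)/2 := by
  induction n with
  | zero => simp
  | succ m ih => rw [Finset.sum_range_succ, ih]; push_cast; ring

lemma my_sum_sq (n : ℕ) : ∑ k ∈ range (n+1), (k:ℝ)^2 = n*(n+1)*(2*n+1)/6 := by
  induction n with
  | zero => simp
  | succ m ih => rw [Finset.sum_range_succ, ih]; push_cast; ring

lemma my_bsum (n : ℕ) (p q : ℝ) (h : p + q = 1) :
    ∑ k ∈ range (n+1), (n.choose k : ℝ) * p^k * q^(n-k) = 1 := by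
  have := add_pow p q n
  rw [h, one_pow] at this
  rw [this]
  exact Finset.sum_congr rfl (fun k _ => by ring)

lemma my_bmean (n : ℕ) (p q : ℝ) (h : p + q = 1) :
    ∑ k ∈ range (n+1), (k:ℝ) * (n.choose k : ℝ) * p^k * q^(n-k) = n * p := by
  induction n with
  | zero => simp
  | succ m _ =>
    rw [Finset.sum_range_succ']
    have key : ∀ k ∈ range (m+1), ((k+1:ℕ):ℝ) * ((m+1).choose (k+1) : ℝ) * p^(k+1) * q^(m+1-(k+1))
        = ((m:ℝ)+1) * p * ((m.choose k : ℝ) * p^k * q^(m-k)) := by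
      intro k _
      have : (k+1) * (m+1).choose (k+1) = (m+1) * m.choose k := by
        rw [mul_comm, Nat.add_one_mul_choose_eq, mul_comm]
      have h2 : ((k:ℝ)+1) * ((m+1).choose (k+1) : ℝ) = ((m:ℝ)+1) * (m.choose k : ℝ) := by
        exact_mod_cast congrArg (Nat.cast (R := ℝ)) this
      have h3 : m + 1 - (k+1) = m - k := by omega
      rw [h3]
      push_cast
      calc ((k:ℝ)+1) * ((m+1).choose (k+1) : ℝ) * p^(k+1) * q^(m-k)
          = (((k:ℝ)+1) * ((m+1).choose (k+1) : ℝ)) * (p^(k+1) * q^(m-k)) := by ring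
        _ = (((m:ℝ)+1) * (m.choose k : ℝ)) * (p^(k+1) * q^(m-k)) := by rw [h2]
        _ = ((m:ℝ)+1) * p * ((m.choose k : ℝ) * p^k * q^(m-k)) := by ring
    rw [Finset.sum_congr rfl key, ← Finset.mul_sum, my_bsum m p q h]
    push_cast
    ring

lemma my_bsq (n : ℕ) (p q : ℝ) (h : p + q = 1) :
    ∑ k ∈ range (n+1), (k:ℝ)^2 * (n.choose k : ℝ) * p^k * q^(n-k)
      = (n:ℝ) * p * (((n:ℝ)-1) * p + 1) := by
  induction n with
  | zero => simp
  | succ m _ =>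
    rw [Finset.sum_range_succ']
    have key : ∀ k ∈ range (m+1), ((k+1:ℕ):ℝ)^2 * ((m+1).choose (k+1) : ℝ) * p^(k+1) * q^(m+1-(k+1))
        = ((m:ℝ)+1) * p * ((k:ℝ) * (m.choose k : ℝ) * p^k * q^(m-k))
          + ((m:ℝ)+1) * p * ((m.choose k : ℝ) * p^k * q^(m-k)) := by
      intro k _
      have : (k+1) * (m+1).choose (k+1) = (m+1) * m.choose k := by
        rw [mul_comm, Nat.add_one_mul_choose_eq, mul_comm]
      have h2 : ((k:ℝ)+1) * ((m+1).choose (k+1) : ℝ) = ((m:ℝ)+1) * (m.choose k : ℝ) := by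
        exact_mod_cast congrArg (Nat.cast (R := ℝ)) this
      have h3 : m + 1 - (k+1) = m - k := by omega
      rw [h3]
      push_cast
      calc ((k:ℝ)+1)^2 * ((m+1).choose (k+1) : ℝ) * p^(k+1) * q^(m-k)
          = (((k:ℝ)+1) * ((m+1).choose (k+1) : ℝ)) * (((k:ℝ)+1) * p^(k+1) * q^(m-k)) := by ring
        _ = (((m:ℝ)+1) * (m.choose k : ℝ)) * (((k:ℝ)+1) * p^(k+1) * q^(m-k)) := by rw [h2]
        _ = _ := by ring
    rw [Finset.sum_congr rfl key, Finset.sum_add_distrib, ← Finset.mul_sum, ← Finset.mul_sum,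
      my_bsum m p q h, my_bmean m p q h]
    push_cast
    ring

lemma my_sum_single {N : ℕ} (g f : Fin N → ℝ) (a : Fin N)
    (hf : ∀ k, f k = if k = a then 1 else 0) : ∑ k, f k * g k = g a := by
  rw [Finset.sum_congr rfl (fun k _ => by rw [hf k, ite_mul, one_mul, zero_mul] :
    ∀ k ∈ univ, f k * g k = if k = a then g k else 0)]
  · simp

lemma my_sum_pair {N : ℕ} (g f : Fin N → ℝ) (a b : Fin N) (hab : a ≠ b) (c : ℝ)
    (hf : ∀ k, f k = if k = a ∨ k = b then c else 0) :
    ∑ k, f k * g k = c * g a + c * g b := by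
  have h0 : ∀ k ∈ (univ : Finset (Fin N)), k ∉ ({a, b} : Finset (Fin N)) → f k * g k = 0 := by
    intro k _ hk
    simp only [Finset.mem_insert, Finset.mem_singleton] at hk
    push_neg at hk
    rw [hf k, if_neg (by tauto), zero_mul]
  rw [← Finset.sum_subset (Finset.subset_univ ({a,b} : Finset (Fin N))) h0,
    Finset.sum_pair hab, hf a, hf b]
  simp [hab]

lemma my_ET_formula (n : ℕ) (P ET : Fin (n + 1) → Fin (n + 1) → ℝ)
    (hP : ∀ i j : Fin (n + 1), P i j =
      if (i : ℕ) = 0 then (if (j : ℕ) = 1 then 1 else 0)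
      else if (i : ℕ) = n then (if (j : ℕ) + 1 = n then 1 else 0)
      else if (j : ℕ) = (i : ℕ) + 1 ∨ (j : ℕ) + 1 = (i : ℕ) then 1 / 2 else 0)
    (hET_diag : ∀ j, ET j j = 0)
    (hET_step : ∀ i j, i ≠ j → ET i j = 1 + ∑ k, P i k * ET k j) :
    ∀ j i : Fin (n + 1), ET i j =
      if (i : ℕ) ≤ (j : ℕ) then ((j : ℕ) : ℝ) ^ 2 - ((i : ℕ) : ℝ) ^ 2
      else ((n : ℝ) - ((j : ℕ) : ℝ)) ^ 2 - ((n : ℝ) - ((i : ℕ) : ℝ)) ^ 2 := by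
  intro j
  set J := (j : ℕ) with hJ
  have hJn : J ≤ n := Nat.lt_succ_iff.mp j.isLt
  set e : ℕ → Fin (n + 1) := fun k => ⟨min k n, by omega⟩ with he
  have hv : ∀ k, k ≤ n → ((e k : Fin (n + 1)) : ℕ) = k := by
    intro k hk; simp [he, Nat.min_eq_left hk]
  have hej : e J = j := by apply Fin.ext; rw [hv J hJn]
  -- boundary equation at 0
  have heq0 : 0 < J → ET (e 0) j = 1 + ET (e 1) j := by
    intro h
    have hn1 : 1 ≤ n := le_trans h hJn
    have hne : e 0 ≠ j := by
      intro hh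
      have := congrArg Fin.val hh
      rw [hv 0 (Nat.zero_le n)] at this
      omega
    rw [hET_step _ _ hne]
    congr 1
    apply my_sum_single (fun k => ET k j) (P (e 0)) (e 1)
    intro k
    rw [hP, hv 0 (Nat.zero_le n)]
    have hiff : ((k : ℕ) = 1) ↔ k = e 1 := by
      rw [Fin.ext_iff, hv 1 hn1]
    rw [if_pos rfl]
    exact if_congr hiff rfl rfl
  -- boundary equation at n
  have heqn : J < n → ET (e n) j = 1 + ET (e (n - 1)) j := by
    intro h
    have hne : e n ≠ j := by
      intro hh
      have := congrArg Fin.val hh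
      rw [hv n le_rfl] at this
      omega
    rw [hET_step _ _ hne]
    congr 1
    apply my_sum_single (fun k => ET k j) (P (e n)) (e (n - 1))
    intro k
    rw [hP, hv n le_rfl]
    have hn0 : ¬ (n = 0) := by omega
    have hiff : ((k : ℕ) + 1 = n) ↔ k = e (n - 1) := by
      rw [Fin.ext_iff, hv (n - 1) (by omega)]
      omega
    rw [if_neg hn0, if_pos rfl]
    exact if_congr hiff rfl rfl
  -- interior equation
  have heqi : ∀ m : ℕ, m + 1 < n → m + 1 ≠ J →
      2 * ET (e (m + 1)) j = 2 + ET (e m) j + ET (e (m + 2)) j := by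
    intro m hmn hmJ
    have hne : e (m + 1) ≠ j := by
      intro hh
      have := congrArg Fin.val hh
      rw [hv (m + 1) (by omega)] at this
      omega
    have hstep := hET_step _ _ hne
    have hsum : ∑ k, P (e (m + 1)) k * ET k j
        = 1 / 2 * ET (e (m + 2)) j + 1 / 2 * ET (e m) j := by
      apply my_sum_pair (fun k => ET k j) (P (e (m + 1))) (e (m + 2)) (e m)
      · intro hh
        have := congrArg Fin.val hh
        rw [hv (m + 2) (by omega), hv m (by omega)] at this
        omega
      · intro k
        rw [hP, hv (m + 1) (by omega)]
        have h1 : ¬ (m + 1 = 0) := by omega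
        have h2 : ¬ (m + 1 = n) := by omega
        have hiff : ((k : ℕ) = m + 1 + 1 ∨ (k : ℕ) + 1 = m + 1) ↔ (k = e (m + 2) ∨ k = e m) := by
          rw [Fin.ext_iff, Fin.ext_iff, hv (m + 2) (by omega), hv m (by omega)]
          omega
        rw [if_neg h1, if_neg h2]
        exact if_congr hiff rfl rfl
    rw [hsum] at hstep
    linarith
  -- downward differences on the left of j
  have hDlow : ∀ i : ℕ, i + 1 ≤ J → ET (e i) j - ET (e (i + 1)) j = 2 * (i : ℝ) + 1 := by
    intro i
    induction i with
    | zero =>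
      intro h
      have := heq0 (by omega)
      push_cast
      linarith
    | succ m ih =>
      intro h
      have h1 := heqi m (by omega) (by omega)
      have h2 := ih (by omega)
      push_cast
      push_cast at h2
      linarith
  -- explicit formula for i ≤ J
  have hFlow : ∀ d i : ℕ, i + d = J → ET (e i) j = (J : ℝ) ^ 2 - (i : ℝ) ^ 2 := by
    intro d
    induction d with
    | zero =>
      intro i hi
      have : i = J := by omega
      subst this
      rw [hej, hET_diag]
      ring
    | succ d ih =>
      intro i hi
      have h1 := ih (i + 1) (by omega)
      have h2 := hDlow i (by omega)
      push_cast at h1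
      linarith
  -- downward differences on the right of j
  have hDhigh : ∀ d : ℕ, J + d + 1 ≤ n →
      ET (e (n - d)) j - ET (e (n - d - 1)) j = 2 * (d : ℝ) + 1 := by
    intro d
    induction d with
    | zero =>
      intro h
      simp only [Nat.sub_zero]
      have := heqn (by omega)
      push_cast
      linarith
    | succ d ih =>
      intro h
      set m := n - d - 2 with hm
      have hm1 : n - (d + 1) = m + 1 := by omega
      have hm2 : n - (d + 1) - 1 = m := by omega
      have hm3 : n - d = m + 2 := by omega
      have hm4 : n - d - 1 = m + 1 := by omega
      have ih' := ih (by omega)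
      rw [hm4, hm3] at ih'
      have h1 := heqi m (by omega) (by omega)
      rw [hm2, hm1]
      push_cast
      linarith
  -- explicit formula for i ≥ J
  have hFhigh : ∀ d : ℕ, J + d ≤ n →
      ET (e (J + d)) j = ((n : ℝ) - (J : ℝ)) ^ 2 - ((n : ℝ) - (J : ℝ) - (d : ℝ)) ^ 2 := by
    intro d
    induction d with
    | zero =>
      intro h
      rw [Nat.add_zero, hej, hET_diag]
      push_cast
      ring
    | succ d ih =>
      intro h
      have ih' := ih (by omega)
      set d' := n - (J + d + 1) with hd'
      have h1 : n - d' = J + d + 1 := by omega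
      have h2 : n - d' - 1 = J + d := by omega
      have hD := hDhigh d' (by omega)
      rw [h2, h1] at hD
      have hc : (d' : ℝ) = (n : ℝ) - (J : ℝ) - (d : ℝ) - 1 := by
        rw [hd', Nat.cast_sub (by omega : J + d + 1 ≤ n)]
        push_cast
        ring
      rw [hc] at hD
      rw [show J + (d + 1) = J + d + 1 by omega]
      push_cast
      nlinarith [ih', hD]
  -- conclusion
  intro i
  have hin : (i : ℕ) ≤ n := Nat.lt_succ_iff.mp i.isLt
  have hei : e (i : ℕ) = i := by apply Fin.ext; rw [hv _ hin]
  by_cases hle : (i : ℕ) ≤ J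
  · rw [if_pos hle]
    have := hFlow (J - (i : ℕ)) (i : ℕ) (by omega)
    rw [hei] at this
    exact this
  · rw [if_neg hle]
    push_neg at hle
    have := hFhigh ((i : ℕ) - J) (by omega)
    rw [show J + ((i : ℕ) - J) = (i : ℕ) by omega, hei,
      Nat.cast_sub (le_of_lt hle)] at this
    rw [this]
    ring

/-- For the simple random walk on the n-path `{0,…,n}` with reflecting
boundaries, with `μ` uniform on `{0,…,n}` and `ν` binomial with parameters `n` and
`p ∈ (0, 1 − 1/√3)`, the access time `H(μ,ν) = max_j Σ_i (μ_i − ν_i) E_i[τ_j]`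
satisfies `H(μ,ν) ≥ n²(p² − 2p + 2/3) + n(p(1−p) − 1/6)`; moreover
`p² − 2p + 2/3 > 0` for such `p`, and `H(μ,ν) ≤ n²`, so `H(μ,ν) = Θ(n²)`. -/
theorem npath_access_time_uniform_binomial
    (n : ℕ) (hn : 0 < n)
    (p : ℝ) (hp0 : 0 < p) (hp1 : p < 1 - 1 / Real.sqrt 3)
    (P : Fin (n + 1) → Fin (n + 1) → ℝ)
    (hP : ∀ i j : Fin (n + 1), P i j =
      if (i : ℕ) = 0 then (if (j : ℕ) = 1 then 1 else 0)
      else if (i : ℕ) = n then (if (j : ℕ) + 1 = n then 1 else 0)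
      else if (j : ℕ) = (i : ℕ) + 1 ∨ (j : ℕ) + 1 = (i : ℕ) then 1 / 2 else 0)
    (ET : Fin (n + 1) → Fin (n + 1) → ℝ)
    (hET_diag : ∀ j, ET j j = 0)
    (hET_step : ∀ i j, i ≠ j → ET i j = 1 + ∑ k, P i k * ET k j)
    (μ ν : Fin (n + 1) → ℝ)
    (hμ : ∀ i, μ i = 1 / ((n : ℝ) + 1))
    (hν : ∀ i : Fin (n + 1), ν i =
      (n.choose (i : ℕ) : ℝ) * p ^ (i : ℕ) * (1 - p) ^ (n - (i : ℕ))) :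
    (n : ℝ) ^ 2 * (p ^ 2 - 2 * p + 2 / 3) + n * (p * (1 - p) - 1 / 6)
      ≤ univ.sup' univ_nonempty (fun j => ∑ i, (μ i - ν i) * ET i j) ∧
    0 < p ^ 2 - 2 * p + 2 / 3 ∧
    univ.sup' univ_nonempty (fun j => ∑ i, (μ i - ν i) * ET i j) ≤ (n : ℝ) ^ 2 := by
  have hq : p + (1 - p) = 1 := by ring
  have hform := my_ET_formula n P ET hP hET_diag hET_step
  -- positivity of the quadratic
  have hs3 : (0:ℝ) < Real.sqrt 3 := Real.sqrt_pos.mpr (by norm_num)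
  have hsq3 : Real.sqrt 3 ^ 2 = 3 := Real.sq_sqrt (by norm_num)
  have hsinv : (0:ℝ) < 1 / Real.sqrt 3 := by positivity
  have hp_lt1 : p < 1 := by linarith
  have h1p : 1 / Real.sqrt 3 < 1 - p := by linarith
  have hmul : 1 < (1 - p) * Real.sqrt 3 := (div_lt_iff₀ hs3).mp h1p
  have hmid : 0 < p ^ 2 - 2 * p + 2 / 3 := by nlinarith [hmul, hsq3, hs3]
  -- bounds on ET
  have hETb : ∀ (i jj : Fin (n + 1)), 0 ≤ ET i jj ∧ ET i jj ≤ (n : ℝ) ^ 2 := by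
    intro i jj
    have hf := hform jj i
    have hi : (i : ℕ) ≤ n := Nat.lt_succ_iff.mp i.isLt
    have hj : (jj : ℕ) ≤ n := Nat.lt_succ_iff.mp jj.isLt
    have hiR : ((i : ℕ) : ℝ) ≤ (n : ℝ) := by exact_mod_cast hi
    have hjR : ((jj : ℕ) : ℝ) ≤ (n : ℝ) := by exact_mod_cast hj
    have hi0 : (0:ℝ) ≤ ((i : ℕ) : ℝ) := Nat.cast_nonneg _
    have hj0 : (0:ℝ) ≤ ((jj : ℕ) : ℝ) := Nat.cast_nonneg _
    rw [hf]
    by_cases hle : (i : ℕ) ≤ (jj : ℕ)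
    · rw [if_pos hle]
      have hleR : ((i : ℕ) : ℝ) ≤ ((jj : ℕ) : ℝ) := by exact_mod_cast hle
      constructor <;> nlinarith
    · rw [if_neg hle]
      push_neg at hle
      have hleR : ((jj : ℕ) : ℝ) ≤ ((i : ℕ) : ℝ) := by exact_mod_cast hle.le
      constructor <;> nlinarith
  have hν_nonneg : ∀ i, 0 ≤ ν i := by
    intro i
    rw [hν]
    have : (0:ℝ) ≤ 1 - p := by linarith
    positivity
  have hμsum : ∑ i : Fin (n + 1), μ i = 1 := by
    rw [Finset.sum_congr rfl fun i _ => hμ i, Finset.sum_const, Finset.card_univ,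
      Fintype.card_fin, nsmul_eq_mul]
    have : (n : ℝ) + 1 ≠ 0 := by positivity
    push_cast
    field_simp
  -- the value at j = 0
  have hET0 : ∀ i : Fin (n + 1), ET i (0 : Fin (n + 1))
      = 2 * (n : ℝ) * ((i : ℕ) : ℝ) - ((i : ℕ) : ℝ) ^ 2 := by
    intro i
    have hf := hform (0 : Fin (n + 1)) i
    rw [Fin.val_zero] at hf
    rcases Nat.eq_zero_or_pos (i : ℕ) with h | h
    · rw [hf, if_pos (by omega), h]
      norm_num
    · rw [hf, if_neg (by omega)]
      push_cast
      ring
  have hS : ∑ i, (μ i - ν i) * ET i (0 : Fin (n + 1))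
      = (n : ℝ) ^ 2 * (p ^ 2 - 2 * p + 2 / 3) + n * (p * (1 - p) - 1 / 6) := by
    have hconv : ∑ i, (μ i - ν i) * ET i (0 : Fin (n + 1))
        = ∑ k ∈ range (n + 1), (1 / ((n : ℝ) + 1) - (n.choose k : ℝ) * p ^ k * (1 - p) ^ (n - k))
            * (2 * (n : ℝ) * (k : ℝ) - (k : ℝ) ^ 2) := by
      rw [← Fin.sum_univ_eq_sum_range]
      exact Finset.sum_congr rfl fun i _ => by rw [hμ, hν, hET0]
    rw [hconv]
    have hexp : ∀ k ∈ range (n + 1),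
        (1 / ((n : ℝ) + 1) - (n.choose k : ℝ) * p ^ k * (1 - p) ^ (n - k))
            * (2 * (n : ℝ) * (k : ℝ) - (k : ℝ) ^ 2)
        = 2 * (n : ℝ) / ((n : ℝ) + 1) * (k : ℝ) - 1 / ((n : ℝ) + 1) * (k : ℝ) ^ 2
          - 2 * (n : ℝ) * ((k : ℝ) * (n.choose k : ℝ) * p ^ k * (1 - p) ^ (n - k))
          + (k : ℝ) ^ 2 * (n.choose k : ℝ) * p ^ k * (1 - p) ^ (n - k) := fun k _ => by ring
    rw [Finset.sum_congr rfl hexp, Finset.sum_add_distrib, Finset.sum_sub_distrib,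
      Finset.sum_sub_distrib, ← Finset.mul_sum, ← Finset.mul_sum, ← Finset.mul_sum,
      my_sum_id, my_sum_sq, my_bmean n p (1 - p) hq, my_bsq n p (1 - p) hq]
    have hne : (n : ℝ) + 1 ≠ 0 := by positivity
    field_simp
    ring
  refine ⟨?_, hmid, ?_⟩
  · have hle0 := Finset.le_sup' (fun j => ∑ i, (μ i - ν i) * ET i j)
      (Finset.mem_univ (0 : Fin (n + 1)))
    calc (n : ℝ) ^ 2 * (p ^ 2 - 2 * p + 2 / 3) + n * (p * (1 - p) - 1 / 6)
        = ∑ i, (μ i - ν i) * ET i (0 : Fin (n + 1)) := hS.symm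
      _ ≤ _ := hle0
  · apply Finset.sup'_le
    intro jj _
    have hsplit : ∑ i, (μ i - ν i) * ET i jj
        = (∑ i, μ i * ET i jj) - ∑ i, ν i * ET i jj := by
      rw [← Finset.sum_sub_distrib]
      exact Finset.sum_congr rfl fun i _ => by ring
    have h1 : ∑ i, μ i * ET i jj ≤ ∑ i, μ i * (n : ℝ) ^ 2 :=
      Finset.sum_le_sum fun i _ =>
        mul_le_mul_of_nonneg_left (hETb i jj).2 (by rw [hμ]; positivity)
    have h2 : ∑ i, μ i * (n : ℝ) ^ 2 = (n : ℝ) ^ 2 := by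
      rw [← Finset.sum_mul, hμsum, one_mul]
    have h3 : 0 ≤ ∑ i, ν i * ET i jj :=
      Finset.sum_nonneg fun i _ => mul_nonneg (hν_nonneg i) (hETb i jj).1
    rw [hsplit]
    linarith
end

section
/- For the simple random walk on the n-star with center 0, the access time equals H(μ,ν) = ν_0 − μ_0 + 2n · max{ max_{j ∈ {1,…,n}} (ν_j − μ_j), 0 }. -/
open Finset

/-- For the simple random walk on the n-star with center `0`
(from `0` the walk moves to a uniformly random leaf, and from each leaf to `0`;
mean hitting times `ET` are characterized by the first-step equations), the access
time `H(μ,ν) = max_j Σ_i (μ_i − ν_i) E_i[τ_j]` equals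
`ν_0 − μ_0 + 2n · max{max_{j ∈ {1,…,n}} (ν_j − μ_j), 0}`. -/
theorem nstar_access_time_formula
    (n : ℕ) (hn : 0 < n)
    (P : Fin (n + 1) → Fin (n + 1) → ℝ)
    (hP : ∀ i j : Fin (n + 1), P i j =
      if (i : ℕ) = 0 then (if (j : ℕ) = 0 then 0 else 1 / (n : ℝ))
      else (if (j : ℕ) = 0 then 1 else 0))
    (ET : Fin (n + 1) → Fin (n + 1) → ℝ)
    (hET_diag : ∀ j, ET j j = 0)
    (hET_step : ∀ i j, i ≠ j → ET i j = 1 + ∑ k, P i k * ET k j)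
    (μ ν : Fin (n + 1) → ℝ)
    (hμ0 : ∀ i, 0 ≤ μ i) (hμ1 : ∑ i, μ i = 1)
    (hν0 : ∀ i, 0 ≤ ν i) (hν1 : ∑ i, ν i = 1) :
    univ.sup' univ_nonempty (fun j => ∑ i, (μ i - ν i) * ET i j)
      = ν 0 - μ 0 + 2 * n *
          max (univ.sup' ⟨⟨0, hn⟩, mem_univ _⟩
            (fun k : Fin n => ν k.succ - μ k.succ)) 0 := by
  have hnR : (0:ℝ) < n := by exact_mod_cast hn
  have hzero : ∀ k : Fin (n+1), (k:ℕ) = 0 ↔ k = 0 := by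
    intro k; constructor
    · intro h; exact Fin.ext h
    · intro h; simp [h]
  -- for a leaf i, the step sum is ET 0 j
  have hsum : ∀ (i j : Fin (n+1)), (i:ℕ) ≠ 0 →
      ∑ k, P i k * ET k j = ET 0 j := by
    intro i j hi
    have : ∀ k : Fin (n+1), P i k * ET k j = if k = 0 then ET 0 j else 0 := by
      intro k
      rw [hP]
      by_cases hk : k = 0
      · simp [hk, hi]
      · have : (k:ℕ) ≠ 0 := fun h => hk ((hzero k).1 h)
        simp [hi, this, hk]
    rw [Finset.sum_congr rfl (fun k _ => this k)]
    simp
  -- ET from a leaf to the center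
  have hleaf0 : ∀ i : Fin (n+1), (i:ℕ) ≠ 0 → ET i 0 = 1 := by
    intro i hi
    have hne : i ≠ 0 := fun h => hi (by simp [h])
    rw [hET_step i 0 hne, hsum i 0 hi, hET_diag]; ring
  -- ET from the center to a leaf
  have hcenter : ∀ j : Fin (n+1), (j:ℕ) ≠ 0 → ET 0 j = 2*n - 1 := by
    intro j hj
    have hne : (0 : Fin (n+1)) ≠ j := fun h => hj (by simp [← h])
    have hleafj : ∀ k : Fin (n+1), k ≠ 0 → k ≠ j → ET k j = 1 + ET 0 j := by
      intro k hk0 hkj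
      have hk0' : (k:ℕ) ≠ 0 := fun h => hk0 ((hzero k).1 h)
      rw [hET_step k j hkj, hsum k j hk0']
    have hj0 : j ≠ 0 := hne.symm
    have hpt : ∀ k : Fin (n+1), P 0 k * ET k j =
        (1/(n:ℝ)) * (1 + ET 0 j) - (if k = 0 then (1/(n:ℝ)) * (1 + ET 0 j) else 0)
          - (if k = j then (1/(n:ℝ)) * (1 + ET 0 j) else 0) := by
      intro k
      rw [hP]
      by_cases hk0 : k = 0
      · subst hk0
        simp [hne]
      · have hk0' : (k:ℕ) ≠ 0 := fun h => hk0 ((hzero k).1 h)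
        by_cases hkj : k = j
        · subst hkj
          simp [hj, hj0, hET_diag]
        · simp [hk0', hk0, hkj, hleafj k hk0 hkj]
          try ring
    have hs := hET_step 0 j hne
    rw [Finset.sum_congr rfl (fun k _ => hpt k)] at hs
    rw [Finset.sum_sub_distrib, Finset.sum_sub_distrib, Finset.sum_const,
      Finset.sum_ite_eq' univ (0 : Fin (n+1)), Finset.sum_ite_eq' univ j] at hs
    simp only [mem_univ, if_true, card_univ, Fintype.card_fin, nsmul_eq_mul] at hs
    push_cast at hs
    have hn0 : (n:ℝ) ≠ 0 := ne_of_gt hnR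
    field_simp at hs
    ring_nf at hs ⊢
    linarith
  -- ET between distinct leaves
  have hll : ∀ i j : Fin (n+1), (i:ℕ) ≠ 0 → (j:ℕ) ≠ 0 → i ≠ j → ET i j = 2*n := by
    intro i j hi hj hij
    rw [hET_step i j hij, hsum i j hi, hcenter j hj]; ring
  -- difference of measures sums to zero
  have hdiff : ∑ i, (μ i - ν i) = 0 := by
    rw [Finset.sum_sub_distrib, hμ1, hν1]; ring
  -- value of the inner sum for each target j
  have hS : ∀ j : Fin (n+1), ∑ i, (μ i - ν i) * ET i j =
      ν 0 - μ 0 + (if (j:ℕ) = 0 then 0 else 2*n*(ν j - μ j)) := by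
    intro j
    by_cases hj : (j:ℕ) = 0
    · have hj' : j = 0 := (hzero j).1 hj
      subst hj'
      have hpt : ∀ i : Fin (n+1), (μ i - ν i) * ET i 0 =
          (μ i - ν i) - (if i = 0 then (μ 0 - ν 0) else 0) := by
        intro i
        by_cases hi : i = 0
        · simp [hi, hET_diag]
        · have hi' : (i:ℕ) ≠ 0 := fun h => hi ((hzero i).1 h)
          simp [hi, hleaf0 i hi']
      rw [Finset.sum_congr rfl (fun i _ => hpt i), Finset.sum_sub_distrib, hdiff,
        Finset.sum_ite_eq' univ (0 : Fin (n+1))]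
      simp
      try ring
    · have hj0 : j ≠ 0 := fun h => hj (by simp [h])
      have hpt : ∀ i : Fin (n+1), (μ i - ν i) * ET i j =
          (μ i - ν i) * (2*n) - (if i = 0 then (μ 0 - ν 0) else 0)
            - (if i = j then (μ j - ν j)*(2*n) else 0) := by
        intro i
        by_cases hi : i = 0
        · subst hi
          have hij : (0 : Fin (n+1)) ≠ j := fun h => hj0 h.symm
          simp [hij, hcenter j hj]
          try ring
        · have hi' : (i:ℕ) ≠ 0 := fun h => hi ((hzero i).1 h)
          by_cases hij : i = j
          · subst hij; simp [hi, hET_diag]; try ring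
          · simp [hi, hij, hll i j hi' hj hij]
            try ring
      rw [Finset.sum_congr rfl (fun i _ => hpt i), Finset.sum_sub_distrib,
        Finset.sum_sub_distrib, ← Finset.sum_mul, hdiff,
        Finset.sum_ite_eq' univ (0 : Fin (n+1)), Finset.sum_ite_eq' univ j]
      simp [hj]
      try ring
  -- now compute the sup
  set A := univ.sup' (⟨⟨0, hn⟩, mem_univ _⟩ : (univ : Finset (Fin n)).Nonempty)
      (fun k : Fin n => ν k.succ - μ k.succ) with hA
  apply le_antisymm
  · apply Finset.sup'_le
    intro j _
    rw [hS j]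
    by_cases hj : (j:ℕ) = 0
    · simp [hj]
      positivity
    · simp only [hj, if_false]
      have hjlt : (j:ℕ) - 1 < n := by omega
      have hk : (⟨(j:ℕ) - 1, hjlt⟩ : Fin n).succ = j := by
        apply Fin.ext
        simp [Fin.succ]
        omega
      have h1 : ν j - μ j ≤ A := by
        rw [hA, ← hk]
        exact Finset.le_sup' (fun k : Fin n => ν k.succ - μ k.succ) (mem_univ _)
      have h2 : ν j - μ j ≤ max A 0 := le_trans h1 (le_max_left _ _)
      nlinarith
  · rcases le_or_gt A 0 with hA0 | hA0
    · rw [max_eq_right hA0]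
      have h0 := hS 0
      rw [if_pos (show ((0 : Fin (n+1)) : ℕ) = 0 by simp)] at h0
      have hle : ∑ i, (μ i - ν i) * ET i 0 ≤
          univ.sup' univ_nonempty (fun j => ∑ i, (μ i - ν i) * ET i j) :=
        Finset.le_sup' (fun j => ∑ i, (μ i - ν i) * ET i j) (mem_univ _)
      rw [h0] at hle
      linarith
    · rw [max_eq_left hA0.le]
      obtain ⟨k, _, hkA⟩ := Finset.exists_mem_eq_sup' (⟨⟨0, hn⟩, mem_univ _⟩ :
        (univ : Finset (Fin n)).Nonempty) (fun k : Fin n => ν k.succ - μ k.succ)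
      have hkval : (k.succ : ℕ) ≠ 0 := by simp [Fin.val_succ]
      have := hS k.succ
      rw [if_neg hkval] at this
      have hle : ∑ i, (μ i - ν i) * ET i k.succ ≤
          univ.sup' univ_nonempty (fun j => ∑ i, (μ i - ν i) * ET i j) :=
        Finset.le_sup' (fun j => ∑ i, (μ i - ν i) * ET i j) (mem_univ _)
      rw [this] at hle
      rw [hA, hkA]
      linarith
end

section
/- For the simple random walk on the n-star with center 0, the access time satisfies, for every j ∈ {1,…,n}, ν_0 − μ_0 + 2n · max{ν_j − μ_j, 0} ≤ H(μ,ν) ≤ (2n+1) · ‖μ − ν‖_TV ≤ 2n + 1, where ‖μ − ν‖_TV := (1/2) Σ_i |μ_i − ν_i| is the total variation distance. -/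
open Finset

/-- For the simple random walk on the n-star with center `0`
(from `0` the walk moves to a uniformly random leaf, and from each leaf to `0`;
mean hitting times `ET` are characterized by the first-step equations), the access
time satisfies, for every leaf `j`,
`ν_0 − μ_0 + 2n · max{ν_j − μ_j, 0} ≤ H(μ,ν) ≤ (2n+1) · ‖μ − ν‖_TV ≤ 2n + 1`,
where `‖μ − ν‖_TV = (1/2) Σ_i |μ_i − ν_i|`. -/
theorem nstar_access_time_bounds
    (n : ℕ) (hn : 0 < n)
    (P : Fin (n + 1) → Fin (n + 1) → ℝ)
    (hP : ∀ i j : Fin (n + 1), P i j =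
      if (i : ℕ) = 0 then (if (j : ℕ) = 0 then 0 else 1 / (n : ℝ))
      else (if (j : ℕ) = 0 then 1 else 0))
    (ET : Fin (n + 1) → Fin (n + 1) → ℝ)
    (hET_diag : ∀ j, ET j j = 0)
    (hET_step : ∀ i j, i ≠ j → ET i j = 1 + ∑ k, P i k * ET k j)
    (μ ν : Fin (n + 1) → ℝ)
    (hμ0 : ∀ i, 0 ≤ μ i) (hμ1 : ∑ i, μ i = 1)
    (hν0 : ∀ i, 0 ≤ ν i) (hν1 : ∑ i, ν i = 1)
    (j : Fin (n + 1)) (hj : (j : ℕ) ≠ 0) :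
    ν 0 - μ 0 + 2 * n * max (ν j - μ j) 0
      ≤ univ.sup' univ_nonempty (fun j => ∑ i, (μ i - ν i) * ET i j) ∧
    univ.sup' univ_nonempty (fun j => ∑ i, (μ i - ν i) * ET i j)
      ≤ (2 * (n : ℝ) + 1) * (1 / 2 * ∑ i, |μ i - ν i|) ∧
    (2 * (n : ℝ) + 1) * (1 / 2 * ∑ i, |μ i - ν i|) ≤ 2 * (n : ℝ) + 1 := by
  have hnR : (0:ℝ) < n := by exact_mod_cast hn
  have hn1 : (1:ℝ) ≤ n := by exact_mod_cast hn
  have hnne : (n:ℝ) ≠ 0 := ne_of_gt hnR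
  -- Step from a leaf: one step goes to center
  have leaf_step : ∀ i t : Fin (n+1), (i:ℕ) ≠ 0 → i ≠ t → ET i t = 1 + ET 0 t := by
    intro i t hi hit
    rw [hET_step i t hit]
    congr 1
    have hterm : ∀ k : Fin (n+1), P i k * ET k t = if k = 0 then ET k t else 0 := by
      intro k
      rw [hP, if_neg hi]
      by_cases hk : k = 0
      · subst hk; simp
      · have hkv : (k:ℕ) ≠ 0 := fun h => hk (Fin.ext (by simpa using h))
        simp [hkv, hk]
    rw [Finset.sum_congr rfl (fun k _ => hterm k),
      Finset.sum_ite_eq' univ (0 : Fin (n+1)) (fun k => ET k t)]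
    simp
  -- Value from the center to a leaf
  have center_val : ∀ t : Fin (n+1), (t:ℕ) ≠ 0 → ET 0 t = 2*(n:ℝ) - 1 := by
    intro t ht
    have h0t : (0 : Fin (n+1)) ≠ t := fun h => ht (by rw [← h]; simp)
    have eq := hET_step 0 t h0t
    set x := ET 0 t with hx
    have hterm : ∀ k : Fin (n+1), P 0 k * ET k t
        = if k = 0 ∨ k = t then 0 else (1/(n:ℝ)) * (1 + x) := by
      intro k
      rw [hP]
      simp only [Fin.val_zero, if_pos rfl]
      by_cases hk0 : k = 0
      · simp [hk0]
      · have hkv : (k:ℕ) ≠ 0 := fun h => hk0 (Fin.ext (by simpa using h))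
        by_cases hkt : k = t
        · rw [if_pos (Or.inr hkt), hkt, hET_diag, mul_zero]
        · rw [if_neg hkv, if_neg (show ¬(k = 0 ∨ k = t) from fun h => h.elim hk0 hkt),
            leaf_step k t hkv hkt, ← hx]
          simp
    have hcardset : univ.filter (fun k : Fin (n+1) => ¬(k = 0 ∨ k = t))
        = univ \ {0, t} := by
      ext k; simp [not_or]
    have hcard : (univ.filter (fun k : Fin (n+1) => ¬(k = 0 ∨ k = t))).card = n - 1 := by
      rw [hcardset, Finset.card_sdiff_of_subset (by simp)]
      have : ({0, t} : Finset (Fin (n+1))).card = 2 := by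
        rw [Finset.card_insert_of_notMem (by simpa using h0t), Finset.card_singleton]
      simp [this, Fintype.card_fin]
    have hsum : ∑ k, P 0 k * ET k t = ((n:ℝ) - 1) * ((1/(n:ℝ)) * (1 + x)) := by
      rw [Finset.sum_congr rfl (fun k _ => hterm k), Finset.sum_ite, Finset.sum_const,
        Finset.sum_const, hcard]
      have : ((n - 1 : ℕ) : ℝ) = (n:ℝ) - 1 := by
        rw [Nat.cast_sub hn]; simp
      simp [this]
    rw [hsum] at eq
    have hexp : (n:ℝ) * x = 2*(n:ℝ) - 1 + (n:ℝ)*x - x := by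
      calc (n:ℝ) * x = (n:ℝ) * (1 + ((n:ℝ) - 1) * ((1/(n:ℝ)) * (1 + x))) := by rw [← eq]
        _ = 2*(n:ℝ) - 1 + (n:ℝ)*x - x := by field_simp; ring
    linarith
  -- explicit values of all hitting times
  have hval : ∀ i t : Fin (n+1), ET i t =
      if i = t then 0 else if (t:ℕ) = 0 then 1
      else if (i:ℕ) = 0 then 2*(n:ℝ) - 1 else 2*(n:ℝ) := by
    intro i t
    by_cases hit : i = t
    · simp [hit, hET_diag]
    · rw [if_neg hit]
      by_cases ht : (t:ℕ) = 0
      · have ht0 : t = 0 := Fin.ext (by simpa using ht)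
        have hi : (i:ℕ) ≠ 0 := by
          intro h; exact hit (Fin.ext (by simp [h, ht]))
        rw [leaf_step i t hi hit, ht0, hET_diag]
        simp
      · rw [if_neg ht]
        by_cases hi : (i:ℕ) = 0
        · have hi0 : i = 0 := Fin.ext (by simpa using hi)
          rw [hi0, center_val t ht]
          simp
        · rw [leaf_step i t hi hit, center_val t ht, if_neg hi]
          ring
  have hET_nonneg : ∀ i t : Fin (n+1), 0 ≤ ET i t := by
    intro i t; rw [hval]; split_ifs <;> linarith
  have hET_le : ∀ i t : Fin (n+1), ET i t ≤ 2*(n:ℝ) := by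
    intro i t; rw [hval]; split_ifs <;> linarith
  have hDsum : ∑ i, (μ i - ν i) = 0 := by
    rw [Finset.sum_sub_distrib, hμ1, hν1]; ring
  -- value of f at 0
  have hf0 : (∑ i, (μ i - ν i) * ET i 0) = ν 0 - μ 0 := by
    have hterm : ∀ i : Fin (n+1), (μ i - ν i) * ET i 0
        = (μ i - ν i) - (if i = (0 : Fin (n+1)) then μ i - ν i else 0) := by
      intro i; rw [hval]
      by_cases h : i = (0 : Fin (n+1)) <;> simp [h]
    rw [Finset.sum_congr rfl (fun i _ => hterm i), Finset.sum_sub_distrib, hDsum,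
      Finset.sum_ite_eq' univ (0 : Fin (n+1)) (fun i => μ i - ν i)]
    simp
  -- value of f at j
  have hfj : (∑ i, (μ i - ν i) * ET i j)
      = ν 0 - μ 0 + 2*(n:ℝ) * (ν j - μ j) := by
    have hterm : ∀ i : Fin (n+1), (μ i - ν i) * ET i j
        = (μ i - ν i) * (2*(n:ℝ))
          - (if i = j then (μ i - ν i) * (2*(n:ℝ)) else 0)
          - (if i = (0 : Fin (n+1)) then μ i - ν i else 0) := by
      intro i; rw [hval]
      by_cases h1 : i = j
      · have hj0 : j ≠ (0 : Fin (n+1)) := fun h => hj (by rw [h]; simp)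
        subst h1
        rw [if_pos rfl, if_pos rfl, if_neg hj0]
        ring
      · by_cases h2 : i = (0 : Fin (n+1))
        · have hi0 : (i:ℕ) = 0 := by rw [h2]; simp
          rw [if_neg h1, if_neg hj, if_pos hi0, if_neg h1, if_pos h2]
          ring
        · have hi0 : (i:ℕ) ≠ 0 := fun h => h2 (Fin.ext (by simpa using h))
          rw [if_neg h1, if_neg hj, if_neg hi0, if_neg h1, if_neg h2]
          ring
    rw [Finset.sum_congr rfl (fun i _ => hterm i), Finset.sum_sub_distrib,
      Finset.sum_sub_distrib, ← Finset.sum_mul, hDsum,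
      Finset.sum_ite_eq' univ j (fun i => (μ i - ν i) * (2*(n:ℝ))),
      Finset.sum_ite_eq' univ (0 : Fin (n+1)) (fun i => μ i - ν i)]
    simp; ring
  -- total variation facts
  have hTVhalf : ∑ i, max (μ i - ν i) 0 = 1/2 * ∑ i, |μ i - ν i| := by
    have hterm : ∀ i : Fin (n+1), max (μ i - ν i) 0 = ((μ i - ν i) + |μ i - ν i|)/2 := by
      intro i
      rcases le_or_gt 0 (μ i - ν i) with h | h
      · rw [max_eq_left h, abs_of_nonneg h]; ring
      · rw [max_eq_right h.le, abs_of_neg h]; ring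
    rw [Finset.sum_congr rfl (fun i _ => hterm i)]
    have hh : ∑ i : Fin (n+1), ((μ i - ν i) + |μ i - ν i|)/2
        = ((∑ i, (μ i - ν i)) + ∑ i, |μ i - ν i|)/2 := by
      rw [← Finset.sum_add_distrib, Finset.sum_div]
    rw [hh, hDsum]
    ring
  have hTVnn : 0 ≤ 1/2 * ∑ i, |μ i - ν i| := by
    have : (0:ℝ) ≤ ∑ i, |μ i - ν i| := Finset.sum_nonneg (fun i _ => abs_nonneg _)
    linarith
  have hTV1 : 1/2 * ∑ i, |μ i - ν i| ≤ 1 := by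
    have h1 : ∑ i, |μ i - ν i| ≤ ∑ i, (μ i + ν i) := by
      apply Finset.sum_le_sum
      intro i _
      exact abs_le.mpr ⟨by linarith [hμ0 i, hν0 i], by linarith [hμ0 i, hν0 i]⟩
    rw [Finset.sum_add_distrib, hμ1, hν1] at h1
    linarith
  refine ⟨?_, ?_, ?_⟩
  · -- lower bound
    rcases le_or_gt (ν j - μ j) 0 with h | h
    · rw [max_eq_right h]
      have := Finset.le_sup' (fun t => ∑ i, (μ i - ν i) * ET i t)
        (Finset.mem_univ (0 : Fin (n+1)))
      rw [hf0] at this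
      linarith
    · rw [max_eq_left h.le]
      have := Finset.le_sup' (fun t => ∑ i, (μ i - ν i) * ET i t)
        (Finset.mem_univ j)
      rw [hfj] at this
      linarith
  · -- upper bound
    apply Finset.sup'_le
    intro t _
    have h1 : ∀ i : Fin (n+1), (μ i - ν i) * ET i t ≤ max (μ i - ν i) 0 * (2*(n:ℝ)) := by
      intro i
      rcases le_or_gt 0 (μ i - ν i) with h | h
      · rw [max_eq_left h]
        exact mul_le_mul_of_nonneg_left (hET_le i t) h
      · rw [max_eq_right h.le, zero_mul]
        exact mul_nonpos_of_nonpos_of_nonneg h.le (hET_nonneg i t)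
    calc ∑ i, (μ i - ν i) * ET i t ≤ ∑ i, max (μ i - ν i) 0 * (2*(n:ℝ)) :=
          Finset.sum_le_sum (fun i _ => h1 i)
      _ = (∑ i, max (μ i - ν i) 0) * (2*(n:ℝ)) := by rw [Finset.sum_mul]
      _ = (2*(n:ℝ)) * (1/2 * ∑ i, |μ i - ν i|) := by rw [hTVhalf]; ring
      _ ≤ (2*(n:ℝ) + 1) * (1/2 * ∑ i, |μ i - ν i|) := by nlinarith [hTVnn]
  · -- TV ≤ 1
    have h2 : (0:ℝ) ≤ 2*(n:ℝ) + 1 := by linarith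
    calc (2*(n:ℝ) + 1) * (1/2 * ∑ i, |μ i - ν i|)
        ≤ (2*(n:ℝ) + 1) * 1 := mul_le_mul_of_nonneg_left hTV1 h2
      _ = 2*(n:ℝ) + 1 := mul_one _
end
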